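/- arXiv:1511.03424 — 4 statements merged into one kernel-verified Lean document; each statement's English description precedes it below -/
import Mathlib

section
/- Let λ, μ ∈ ℂ with |λ| ≥ |μ| > 1 and λ ≠ μᵐ for every positive integer m, and set p = ⌊log|λ|/log|μ|⌋. Suppose ξ₁, ξ₂ : ℂ² × [0,∞) → ℂ are as in the context and satisfy ξ₁(λz₁, μz₂, φ(x)) = λ·ξ₁(z₁,z₂,x) and ξ₂(λz₁, μz₂, φ(x)) = μ·ξ₂(z₁,z₂,x) for all (z₁,z₂) ∈ ℂ² and x ≥ 0. Then there exist continuous functions a₀, a₁, …, a_p, b : [0,∞) → ℂ, all vanishing at 0, with aⱼ(φ(x)) = (λ/μʲ)·aⱼ(x) for 0 ≤ j ≤ p and b(φ(x)) = μ·b(x), such that ξ₁(z₁,z₂,x) = z₁ + Σ_{j=0}^{p} aⱼ(x)·z₂ʲ and ξ₂(z₁,z₂,x) = z₂ + b(x). (Classification in Case 3 of Section 3.2, underlying Theorem 3.10 (2)) -/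
open Set Filter Metric Topology

lemma entire_deriv {f : ℂ → ℂ} (hf : Differentiable ℂ f) :
    Differentiable ℂ (deriv f) := by
  have h1 : Differentiable ℂ (fderiv ℂ f) :=
    fun z => ((hf.analyticAt z).fderiv).differentiableAt
  exact h1.clm_apply (differentiable_const _)

lemma polyLiouville (p : ℕ) : ∀ (d : ℝ), d < p + 1 → ∀ f : ℂ → ℂ, Differentiable ℂ f →
    ∀ C : ℝ, (∀ z, ‖f z‖ ≤ C * (max 1 ‖z‖) ^ d) →
    ∃ c : Fin (p + 1) → ℂ, ∀ z, f z = ∑ j : Fin (p + 1), c j * z ^ (j : ℕ) := by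
  induction p with
  | zero =>
    intro d hd f hf C hC
    have hC0 : 0 ≤ C := le_trans (norm_nonneg _) (by simpa only [norm_zero, max_eq_left zero_le_one, Real.one_rpow, mul_one] using hC 0)
    set e := max d 0 with he_def
    have he0 : 0 ≤ e := le_max_right _ _
    have he1 : e < 1 := max_lt (by simpa using hd) one_pos
    have hC' : ∀ z, ‖f z‖ ≤ C * (max 1 ‖z‖) ^ e := fun z =>
      (hC z).trans (mul_le_mul_of_nonneg_left
        (Real.rpow_le_rpow_of_exponent_le (le_max_left _ _) (le_max_left _ _)) hC0)
    have hderiv0 : ∀ z, deriv f z = 0 := by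
      intro z
      have htend : Tendsto (fun r : ℝ => (C * 2 ^ e) * r ^ (e - 1)) atTop (𝓝 0) := by
        have : Tendsto (fun r : ℝ => r ^ (-(1 - e))) atTop (𝓝 0) :=
          tendsto_rpow_neg_atTop (by linarith)
        simpa [neg_sub] using this.const_mul (C * 2 ^ e)
      refine norm_le_zero_iff.1 (ge_of_tendsto htend ?_)
      rw [eventually_atTop]
      refine ⟨max 1 ‖z‖, fun r hr => ?_⟩
      have hr1 : (1 : ℝ) ≤ r := le_trans (le_max_left _ _) hr
      have hr0 : (0 : ℝ) < r := lt_of_lt_of_le one_pos hr1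
      have hb : ∀ w ∈ sphere z r, ‖f w‖ ≤ C * 2 ^ e * r ^ e := by
        intro w hw
        have hw' : ‖w - z‖ = r := by simpa [dist_eq_norm] using hw
        have hwn : ‖w‖ ≤ ‖z‖ + r := by
          calc ‖w‖ = ‖z + (w - z)‖ := by ring_nf
          _ ≤ ‖z‖ + ‖w - z‖ := norm_add_le _ _
          _ = ‖z‖ + r := by rw [hw']
        have hmax : max 1 ‖w‖ ≤ 2 * r := by
          have : ‖z‖ ≤ r := le_trans (le_max_right 1 _) hr
          refine max_le (by linarith) (by linarith)
        calc ‖f w‖ ≤ C * (max 1 ‖w‖) ^ e := hC' w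
        _ ≤ C * (2 * r) ^ e := by
          refine mul_le_mul_of_nonneg_left ?_ hC0
          exact Real.rpow_le_rpow (le_trans zero_le_one (le_max_left _ _)) hmax he0
        _ = C * 2 ^ e * r ^ e := by
          rw [Real.mul_rpow (by norm_num) hr0.le, mul_assoc]
      have := Complex.norm_deriv_le_of_forall_mem_sphere_norm_le hr0 hf.diffContOnCl hb
      calc ‖deriv f z‖ ≤ C * 2 ^ e * r ^ e / r := this
      _ = C * 2 ^ e * r ^ (e - 1) := by
        rw [Real.rpow_sub hr0, Real.rpow_one, mul_div_assoc]
    have hconst : ∀ z, f z = f 0 := fun z => is_const_of_deriv_eq_zero hf hderiv0 z 0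
    exact ⟨fun _ => f 0, fun z => by simp [hconst z]⟩
  | succ p IH =>
    intro d hd f hf C hC
    have hC0 : 0 ≤ C := le_trans (norm_nonneg _) (by simpa only [norm_zero, max_eq_left zero_le_one, Real.one_rpow, mul_one] using hC 0)
    set e := max d 1 with he_def
    have he1 : 1 ≤ e := le_max_right _ _
    have he0 : 0 ≤ e := le_trans zero_le_one he1
    have he : e < (p + 1 : ℕ) + 1 := by
      refine max_lt (by exact_mod_cast hd) ?_
      push_cast; linarith
    have hC' : ∀ z, ‖f z‖ ≤ C * (max 1 ‖z‖) ^ e := fun z =>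
      (hC z).trans (mul_le_mul_of_nonneg_left
        (Real.rpow_le_rpow_of_exponent_le (le_max_left _ _) (le_max_left _ _)) hC0)
    have hder : Differentiable ℂ (deriv f) := entire_deriv hf
    have hCd : ∀ z, ‖deriv f z‖ ≤ (C * 2 ^ e) * (max 1 ‖z‖) ^ (e - 1) := by
      intro z
      set R := max 1 ‖z‖ with hR_def
      have hR1 : (1 : ℝ) ≤ R := le_max_left _ _
      have hR0 : (0 : ℝ) < R := lt_of_lt_of_le one_pos hR1
      have hb : ∀ w ∈ sphere z R, ‖f w‖ ≤ C * 2 ^ e * R ^ e := by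
        intro w hw
        have hw' : ‖w - z‖ = R := by simpa [dist_eq_norm] using hw
        have hwn : ‖w‖ ≤ ‖z‖ + R := by
          calc ‖w‖ = ‖z + (w - z)‖ := by ring_nf
          _ ≤ ‖z‖ + ‖w - z‖ := norm_add_le _ _
          _ = ‖z‖ + R := by rw [hw']
        have hmax : max 1 ‖w‖ ≤ 2 * R := by
          have : ‖z‖ ≤ R := le_max_right 1 _
          refine max_le (by linarith) (by linarith)
        calc ‖f w‖ ≤ C * (max 1 ‖w‖) ^ e := hC' w
        _ ≤ C * (2 * R) ^ e := by
          refine mul_le_mul_of_nonneg_left ?_ hC0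
          exact Real.rpow_le_rpow (le_trans zero_le_one (le_max_left _ _)) hmax he0
        _ = C * 2 ^ e * R ^ e := by
          rw [Real.mul_rpow (by norm_num) hR0.le, mul_assoc]
      have := Complex.norm_deriv_le_of_forall_mem_sphere_norm_le hR0 hf.diffContOnCl hb
      calc ‖deriv f z‖ ≤ C * 2 ^ e * R ^ e / R := this
      _ = C * 2 ^ e * R ^ (e - 1) := by
        rw [Real.rpow_sub hR0, Real.rpow_one, mul_div_assoc]
    obtain ⟨c', hc'⟩ := IH (e - 1) (by push_cast at he ⊢; linarith) (deriv f) hder _ hCd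
    set F : ℂ → ℂ := fun z => ∑ j : Fin (p + 1), c' j * ((j : ℂ) + 1)⁻¹ * z ^ ((j : ℕ) + 1)
      with hF_def
    have hF : ∀ z, HasDerivAt F (∑ j : Fin (p + 1), c' j * z ^ (j : ℕ)) z := by
      intro z
      have h1 : ∀ j : Fin (p + 1), HasDerivAt
          (fun w : ℂ => c' j * ((j : ℂ) + 1)⁻¹ * w ^ ((j : ℕ) + 1))
          (c' j * z ^ (j : ℕ)) z := by
        intro j
        have := (hasDerivAt_pow ((j : ℕ) + 1) z).const_mul (c' j * ((j : ℂ) + 1)⁻¹)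
        refine this.congr_deriv ?_
        have hne : ((j : ℂ) + 1) ≠ 0 := by
          exact Nat.cast_add_one_ne_zero (j : ℕ)
        push_cast
        field_simp
      simpa using HasDerivAt.fun_sum (fun j _ => h1 j)
    have hFdiff : Differentiable ℂ F := fun z => (hF z).differentiableAt
    have hzero : ∀ z, deriv (fun w => f w - F w) z = 0 := by
      intro z
      have h2 : HasDerivAt (fun w => f w - F w)
          (deriv f z - ∑ j : Fin (p + 1), c' j * z ^ (j : ℕ)) z :=
        ((hf z).hasDerivAt).sub (hF z)
      rw [hc' z, sub_self] at h2
      exact h2.deriv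
    have hconst : ∀ z, f z - F z = f 0 - F 0 :=
      fun z => is_const_of_deriv_eq_zero (hf.sub hFdiff) hzero z 0
    have hF0 : F 0 = 0 := by
      simp [hF_def]
    refine ⟨Fin.cases (f 0) (fun j => c' j * ((j : ℂ) + 1)⁻¹), fun z => ?_⟩
    have h3 : f z = f 0 + F z := by
      have := hconst z; rw [hF0] at this; linear_combination this
    rw [h3, Fin.sum_univ_succ]
    simp [hF_def, Fin.val_succ]

lemma affine_of_linear_growth (f : ℂ → ℂ) (hf : Differentiable ℂ f) (C : ℝ)
    (hC : ∀ z, ‖f z‖ ≤ C * max 1 ‖z‖) : ∀ z, f z = f 0 + (f 1 - f 0) * z := by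
  obtain ⟨c, hc⟩ := polyLiouville 1 1 (by norm_num) f hf C
    (fun z => by simpa [Real.rpow_one] using hC z)
  have h0 := hc 0
  have h1 := hc 1
  intro z
  have hz := hc z
  simp [Fin.sum_univ_two] at h0 h1 hz
  rw [hz, h0, h1]; ring

lemma const_of_bounded (f : ℂ → ℂ) (hf : Differentiable ℂ f) (C : ℝ)
    (hC : ∀ z, ‖f z‖ ≤ C) : ∀ z, f z = f 0 := by
  obtain ⟨c, hc⟩ := polyLiouville 0 0 (by norm_num) f hf C
    (fun z => by simpa [Real.rpow_zero] using hC z)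
  have h0 := hc 0
  intro z
  have hz := hc z
  simp [Fin.sum_univ_one] at h0 hz
  rw [hz, h0]

lemma exists_pow_ge_aux {β : ℝ} (hβ : 1 < β) (t : ℝ) :
    ∃ n : ℕ, t ≤ β ^ n ∧ β ^ n ≤ β * max 1 t := by
  rcases le_or_gt t 1 with ht | ht
  · exact ⟨0, by simpa using ht, by
      simp only [pow_zero]
      calc (1:ℝ) ≤ β := hβ.le
      _ = β * 1 := (mul_one β).symm
      _ ≤ β * max 1 t := by
        refine mul_le_mul_of_nonneg_left (le_max_left _ _) (by linarith)⟩
  · have hS : ∃ n : ℕ, t ≤ β ^ n := (pow_unbounded_of_one_lt t hβ).imp fun n h => h.le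
    classical
    set n := Nat.find hS with hn_def
    have hspec : t ≤ β ^ n := Nat.find_spec hS
    have hn0 : n ≠ 0 := by
      intro h
      rw [h] at hspec
      simp at hspec; linarith
    obtain ⟨m, hm⟩ : ∃ m, n = m + 1 := ⟨n - 1, (Nat.succ_pred_eq_of_pos (Nat.pos_of_ne_zero hn0)).symm⟩
    have hmin : ¬ t ≤ β ^ m := Nat.find_min hS (by omega)
    push_neg at hmin
    refine ⟨n, hspec, ?_⟩
    have : β ^ n = β * β ^ m := by rw [hm, pow_succ]; ring
    rw [this]
    have : β ^ m ≤ max 1 t := le_trans hmin.le (le_max_right _ _)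
    exact mul_le_mul_of_nonneg_left this (by linarith)

lemma orbit_vanish (φ : ℝ → ℝ) (hφcont : ContinuousOn φ (Set.Ici 0))
    (hφbij : Set.BijOn φ (Set.Ici 0) (Set.Ici 0)) (hφ0 : φ 0 = 0)
    (hexp : ∀ x : ℝ, 0 < x → x < φ x)
    (κ : ℂ) (hκ : ‖κ‖ ≤ 1) (ρ : ℝ → ℂ)
    (hρ : ContinuousOn ρ (Set.Ici 0)) (hrel : ∀ x : ℝ, 0 ≤ x → ρ (φ x) = κ * ρ x)
    (hρ0 : ρ 0 = 0) : ∀ x : ℝ, 0 ≤ x → ρ x = 0 := by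
  set ψ := fun y => Function.invFunOn φ (Set.Ici 0) y with hψ_def
  have hψ : ∀ y : ℝ, 0 ≤ y → (0 ≤ ψ y ∧ φ (ψ y) = y) := by
    intro y hy
    have himg : y ∈ φ '' (Set.Ici 0) := hφbij.surjOn (Set.mem_Ici.2 hy)
    exact ⟨Function.invFunOn_mem himg, Function.invFunOn_eq himg⟩
  have hψle : ∀ y : ℝ, 0 ≤ y → ψ y ≤ y := by
    intro y hy
    rcases lt_or_ge 0 (ψ y) with h | h
    · have := hexp (ψ y) h
      rw [(hψ y hy).2] at this
      exact this.le
    · linarith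
  intro x hx
  set u : ℕ → ℝ := fun n => ψ^[n] x with hu_def
  have husucc : ∀ n, u (n + 1) = ψ (u n) := fun n => Function.iterate_succ_apply' ψ n x
  have hu0 : ∀ n, 0 ≤ u n ∧ u n ≤ x := by
    intro n
    induction n with
    | zero => exact ⟨hx, le_rfl⟩
    | succ n ih =>
      rw [husucc]
      exact ⟨(hψ (u n) ih.1).1, le_trans (hψle (u n) ih.1) ih.2⟩
  have hanti : Antitone u := antitone_nat_of_succ_le fun n => by
    rw [husucc]; exact hψle _ (hu0 n).1
  have hbdd : BddBelow (Set.range u) := ⟨0, fun y ⟨n, hn⟩ => hn ▸ (hu0 n).1⟩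
  have hlim : Tendsto u atTop (𝓝 (⨅ n, u n)) := tendsto_atTop_ciInf hanti hbdd
  set L := ⨅ n, u n with hL_def
  have hL0 : 0 ≤ L := le_ciInf fun n => (hu0 n).1
  have hφL : φ L = L := by
    have h1 : Tendsto (fun n => u (n + 1)) atTop (𝓝 L) :=
      hlim.comp (tendsto_add_atTop_nat 1)
    have h2 : Tendsto (fun n => φ (u (n + 1))) atTop (𝓝 (φ L)) := by
      refine (hφcont L hL0).tendsto.comp ?_
      exact tendsto_nhdsWithin_of_tendsto_nhds_of_eventually_within _ h1
        (Filter.Eventually.of_forall fun n => (hu0 (n + 1)).1)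
    have h3 : (fun n => φ (u (n + 1))) = fun n => u n := by
      funext n
      rw [husucc]
      exact (hψ (u n) (hu0 n).1).2
    rw [h3] at h2
    exact tendsto_nhds_unique h2 hlim
  have hLzero : L = 0 := by
    rcases lt_or_eq_of_le hL0 with h | h
    · exfalso
      have := hexp L h; rw [hφL] at this; linarith
    · exact h.symm
  have hrep : ∀ n, ρ x = κ ^ n * ρ (u n) := by
    intro n
    induction n with
    | zero => simp [hu_def]
    | succ n ih =>
      have h4 : ρ (u n) = κ * ρ (u (n + 1)) := by
        rw [husucc]
        conv_lhs => rw [← (hψ (u n) (hu0 n).1).2]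
        exact hrel _ (hψ (u n) (hu0 n).1).1
      rw [ih, h4, pow_succ]; ring
  have hnorm : ∀ n, ‖ρ x‖ ≤ ‖ρ (u n)‖ := by
    intro n
    rw [hrep n, norm_mul, norm_pow]
    have h5 : ‖κ‖ ^ n ≤ 1 := pow_le_one₀ (norm_nonneg _) hκ
    calc ‖κ‖ ^ n * ‖ρ (u n)‖ ≤ 1 * ‖ρ (u n)‖ :=
      mul_le_mul_of_nonneg_right h5 (norm_nonneg _)
    _ = ‖ρ (u n)‖ := one_mul _
  have htend : Tendsto (fun n => ‖ρ (u n)‖) atTop (𝓝 0) := by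
    have h6 : Tendsto (fun n => ρ (u n)) atTop (𝓝 (ρ 0)) := by
      refine (hρ 0 (Set.mem_Ici.2 le_rfl)).tendsto.comp ?_
      refine tendsto_nhdsWithin_of_tendsto_nhds_of_eventually_within _ ?_
        (Filter.Eventually.of_forall fun n => (hu0 n).1)
      rwa [hLzero] at hlim
    rw [hρ0] at h6
    simpa using h6.norm
  exact norm_le_zero_iff.1 (ge_of_tendsto htend (Filter.Eventually.of_forall hnorm))

/-- Case 3 of Section 3.2 (underlying Theorem 3.10 (2)): for `G(z₁,z₂) = (λz₁, μz₂)`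
with `|λ| ≥ |μ| > 1` and `λ ≠ μᵐ` for all `m ≥ 1`, with `p = ⌊log|λ|/log|μ|⌋`,
any leafwise-holomorphic lift `(ξ₁, ξ₂)` restricting to the identity on the
boundary and equivariant for `T` has the form `ξ₁ = z₁ + Σ_{j≤p} aⱼ(x)·z₂ʲ`,
`ξ₂ = z₂ + b(x)` with `aⱼ ∈ 𝒵_{φ,λμ^{−j}}`, `b ∈ 𝒵_{φ,μ}`. -/
theorem case_3_classification (lam μ : ℂ)
    (hμ : 1 < ‖μ‖) (hlamμ : ‖μ‖ ≤ ‖lam‖)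
    (hne : ∀ m : ℕ, 0 < m → lam ≠ μ ^ m)
    (p : ℕ) (hp : p = ⌊Real.log (‖lam‖) / Real.log (‖μ‖)⌋₊)
    (φ : ℝ → ℝ)
    (hφcont : ContinuousOn φ (Set.Ici 0))
    (hφmono : StrictMonoOn φ (Set.Ici 0))
    (hφbij : Set.BijOn φ (Set.Ici 0) (Set.Ici 0))
    (hφ0 : φ 0 = 0)
    (hexp : ∀ x : ℝ, 0 < x → x < φ x)
    (ξ₁ ξ₂ : ℂ → ℂ → ℝ → ℂ)
    (hcont₁ : ContinuousOn (fun q : ℂ × ℂ × ℝ => ξ₁ q.1 q.2.1 q.2.2)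
      (Set.univ ×ˢ Set.univ ×ˢ Set.Ici 0))
    (hcont₂ : ContinuousOn (fun q : ℂ × ℂ × ℝ => ξ₂ q.1 q.2.1 q.2.2)
      (Set.univ ×ˢ Set.univ ×ˢ Set.Ici 0))
    (hholo₁ : ∀ x : ℝ, 0 ≤ x → Differentiable ℂ (fun z : ℂ × ℂ => ξ₁ z.1 z.2 x))
    (hholo₂ : ∀ x : ℝ, 0 ≤ x → Differentiable ℂ (fun z : ℂ × ℂ => ξ₂ z.1 z.2 x))
    (hbd₁ : ∀ z₁ z₂ : ℂ, ξ₁ z₁ z₂ 0 = z₁)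
    (hbd₂ : ∀ z₁ z₂ : ℂ, ξ₂ z₁ z₂ 0 = z₂)
    (hL1 : ∀ z₁ z₂ : ℂ, ∀ x : ℝ, 0 ≤ x →
      ξ₁ (lam * z₁) (μ * z₂) (φ x) = lam * ξ₁ z₁ z₂ x)
    (hL2 : ∀ z₁ z₂ : ℂ, ∀ x : ℝ, 0 ≤ x →
      ξ₂ (lam * z₁) (μ * z₂) (φ x) = μ * ξ₂ z₁ z₂ x) :
    ∃ a : Fin (p + 1) → ℝ → ℂ, ∃ b : ℝ → ℂ,
      (∀ j : Fin (p + 1), ContinuousOn (a j) (Set.Ici 0)) ∧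
      ContinuousOn b (Set.Ici 0) ∧
      (∀ j : Fin (p + 1), a j 0 = 0) ∧ b 0 = 0 ∧
      (∀ j : Fin (p + 1), ∀ x : ℝ, 0 ≤ x →
        a j (φ x) = (lam / μ ^ (j : ℕ)) * a j x) ∧
      (∀ x : ℝ, 0 ≤ x → b (φ x) = μ * b x) ∧
      ∀ z₁ z₂ : ℂ, ∀ x : ℝ, 0 ≤ x →
        ξ₁ z₁ z₂ x = z₁ + ∑ j : Fin (p + 1), a j x * z₂ ^ (j : ℕ) ∧
        ξ₂ z₁ z₂ x = z₂ + b x := by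
  classical
  have hlam1 : 1 < ‖lam‖ := lt_of_lt_of_le hμ hlamμ
  have haμ0 : (0 : ℝ) < ‖μ‖ := lt_trans one_pos hμ
  have halam0 : (0 : ℝ) < ‖lam‖ := lt_trans one_pos hlam1
  have hμ0 : μ ≠ 0 := by
    intro h; rw [h] at hμ; simp at hμ; linarith
  have hlam0 : lam ≠ 0 := by
    intro h; rw [h] at hlam1; simp at hlam1; linarith
  have hφmap : ∀ x : ℝ, 0 ≤ x → 0 ≤ φ x := fun x hx => hφbij.mapsTo (Set.mem_Ici.2 hx)
  -- inverse of φ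
  set ψ := fun y => Function.invFunOn φ (Set.Ici 0) y with hψ_def
  have hψ : ∀ y : ℝ, 0 ≤ y → (0 ≤ ψ y ∧ φ (ψ y) = y) := by
    intro y hy
    have himg : y ∈ φ '' (Set.Ici 0) := hφbij.surjOn (Set.mem_Ici.2 hy)
    exact ⟨Function.invFunOn_mem himg, Function.invFunOn_eq himg⟩
  have hψle : ∀ y : ℝ, 0 ≤ y → ψ y ≤ y := by
    intro y hy
    rcases lt_or_ge 0 (ψ y) with h | h
    · have := hexp (ψ y) h
      rw [(hψ y hy).2] at this
      exact this.le
    · linarith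
  have hψiter : ∀ n : ℕ, ∀ x : ℝ, 0 ≤ x → (0 ≤ ψ^[n] x ∧ ψ^[n] x ≤ x) := by
    intro n
    induction n with
    | zero => intro x hx; exact ⟨hx, le_rfl⟩
    | succ n ih =>
      intro x hx
      rw [Function.iterate_succ_apply' ψ n x]
      obtain ⟨h1, h2⟩ := ih x hx
      exact ⟨(hψ _ h1).1, le_trans (hψle _ h1) h2⟩
  -- iterated equivariance
  have key₁ : ∀ n : ℕ, ∀ z₁ z₂ : ℂ, ∀ x : ℝ, 0 ≤ x →
      ξ₁ (lam ^ n * z₁) (μ ^ n * z₂) x = lam ^ n * ξ₁ z₁ z₂ (ψ^[n] x) := by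
    intro n
    induction n with
    | zero => intro z₁ z₂ x hx; simp
    | succ n ih =>
      intro z₁ z₂ x hx
      have h1 : lam ^ (n + 1) * z₁ = lam * (lam ^ n * z₁) := by ring
      have h2 : μ ^ (n + 1) * z₂ = μ * (μ ^ n * z₂) := by ring
      have h3 : x = φ (ψ x) := ((hψ x hx).2).symm
      rw [h1, h2]
      calc ξ₁ (lam * (lam ^ n * z₁)) (μ * (μ ^ n * z₂)) x
          = ξ₁ (lam * (lam ^ n * z₁)) (μ * (μ ^ n * z₂)) (φ (ψ x)) := by rw [← h3]
        _ = lam * ξ₁ (lam ^ n * z₁) (μ ^ n * z₂) (ψ x) := hL1 _ _ _ (hψ x hx).1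
        _ = lam * (lam ^ n * ξ₁ z₁ z₂ (ψ^[n] (ψ x))) := by rw [ih _ _ _ (hψ x hx).1]
        _ = lam ^ (n + 1) * ξ₁ z₁ z₂ (ψ^[n + 1] x) := by
            rw [← Function.iterate_succ_apply ψ n x]; ring
  have key₂ : ∀ n : ℕ, ∀ z₁ z₂ : ℂ, ∀ x : ℝ, 0 ≤ x →
      ξ₂ (lam ^ n * z₁) (μ ^ n * z₂) x = μ ^ n * ξ₂ z₁ z₂ (ψ^[n] x) := by
    intro n
    induction n with
    | zero => intro z₁ z₂ x hx; simp
    | succ n ih =>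
      intro z₁ z₂ x hx
      have h1 : lam ^ (n + 1) * z₁ = lam * (lam ^ n * z₁) := by ring
      have h2 : μ ^ (n + 1) * z₂ = μ * (μ ^ n * z₂) := by ring
      have h3 : x = φ (ψ x) := ((hψ x hx).2).symm
      rw [h1, h2]
      calc ξ₂ (lam * (lam ^ n * z₁)) (μ * (μ ^ n * z₂)) x
          = ξ₂ (lam * (lam ^ n * z₁)) (μ * (μ ^ n * z₂)) (φ (ψ x)) := by rw [← h3]
        _ = μ * ξ₂ (lam ^ n * z₁) (μ ^ n * z₂) (ψ x) := hL2 _ _ _ (hψ x hx).1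
        _ = μ * (μ ^ n * ξ₂ z₁ z₂ (ψ^[n] (ψ x))) := by rw [ih _ _ _ (hψ x hx).1]
        _ = μ ^ (n + 1) * ξ₂ z₁ z₂ (ψ^[n + 1] x) := by
            rw [← Function.iterate_succ_apply ψ n x]; ring
  -- bounds on the fundamental compact set
  have hbound : ∀ (ξ : ℂ → ℂ → ℝ → ℂ),
      ContinuousOn (fun q : ℂ × ℂ × ℝ => ξ q.1 q.2.1 q.2.2)
        (Set.univ ×ˢ Set.univ ×ˢ Set.Ici 0) →
      ∀ x : ℝ, 0 ≤ x → ∃ M : ℝ, 0 ≤ M ∧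
        ∀ w₁ w₂ : ℂ, ∀ y : ℝ, ‖w₁‖ ≤ 1 → ‖w₂‖ ≤ 1 → y ∈ Set.Icc 0 x →
          ‖ξ w₁ w₂ y‖ ≤ M := by
    intro ξ hcont x hx
    have hcomp : IsCompact ((closedBall (0:ℂ) 1) ×ˢ ((closedBall (0:ℂ) 1) ×ˢ (Icc (0:ℝ) x))) :=
      (isCompact_closedBall _ _).prod ((isCompact_closedBall _ _).prod isCompact_Icc)
    have hsub : ((closedBall (0:ℂ) 1) ×ˢ ((closedBall (0:ℂ) 1) ×ˢ (Icc (0:ℝ) x))) ⊆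
        (Set.univ ×ˢ Set.univ ×ˢ Set.Ici 0) := by
      rintro ⟨w₁, w₂, y⟩ ⟨-, -, hy⟩
      exact ⟨Set.mem_univ _, Set.mem_univ _, hy.1⟩
    obtain ⟨M, hM⟩ := hcomp.exists_bound_of_continuousOn (hcont.mono hsub)
    refine ⟨max M 0, le_max_right _ _, fun w₁ w₂ y h1 h2 hy => ?_⟩
    refine le_trans (hM (w₁, w₂, y) ?_) (le_max_left _ _)
    exact ⟨mem_closedBall_zero_iff.2 h1, mem_closedBall_zero_iff.2 h2, hy⟩
  -- polydisk growth bounds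
  have bound₁ : ∀ x : ℝ, 0 ≤ x → ∃ M : ℝ, 0 ≤ M ∧ ∀ n : ℕ, ∀ w₁ w₂ : ℂ,
      ‖w₁‖ ≤ ‖lam‖ ^ n → ‖w₂‖ ≤ ‖μ‖ ^ n →
      ‖ξ₁ w₁ w₂ x‖ ≤ ‖lam‖ ^ n * M := by
    intro x hx
    obtain ⟨M, hM0, hM⟩ := hbound ξ₁ hcont₁ x hx
    refine ⟨M, hM0, fun n w₁ w₂ h1 h2 => ?_⟩
    have hlamn : (lam : ℂ) ^ n ≠ 0 := pow_ne_zero _ hlam0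
    have hμn : (μ : ℂ) ^ n ≠ 0 := pow_ne_zero _ hμ0
    have heq : ξ₁ w₁ w₂ x = lam ^ n * ξ₁ (w₁ / lam ^ n) (w₂ / μ ^ n) (ψ^[n] x) := by
      have := key₁ n (w₁ / lam ^ n) (w₂ / μ ^ n) x hx
      rwa [mul_div_cancel₀ _ hlamn, mul_div_cancel₀ _ hμn] at this
    rw [heq, norm_mul, norm_pow]
    refine mul_le_mul_of_nonneg_left ?_ (by positivity)
    refine hM _ _ _ ?_ ?_ ⟨(hψiter n x hx).1, (hψiter n x hx).2⟩
    · rw [norm_div, norm_pow]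
      rw [div_le_one (by positivity)]; exact h1
    · rw [norm_div, norm_pow]
      rw [div_le_one (by positivity)]; exact h2
  have bound₂ : ∀ x : ℝ, 0 ≤ x → ∃ M : ℝ, 0 ≤ M ∧ ∀ n : ℕ, ∀ w₁ w₂ : ℂ,
      ‖w₁‖ ≤ ‖lam‖ ^ n → ‖w₂‖ ≤ ‖μ‖ ^ n →
      ‖ξ₂ w₁ w₂ x‖ ≤ ‖μ‖ ^ n * M := by
    intro x hx
    obtain ⟨M, hM0, hM⟩ := hbound ξ₂ hcont₂ x hx
    refine ⟨M, hM0, fun n w₁ w₂ h1 h2 => ?_⟩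
    have hlamn : (lam : ℂ) ^ n ≠ 0 := pow_ne_zero _ hlam0
    have hμn : (μ : ℂ) ^ n ≠ 0 := pow_ne_zero _ hμ0
    have heq : ξ₂ w₁ w₂ x = μ ^ n * ξ₂ (w₁ / lam ^ n) (w₂ / μ ^ n) (ψ^[n] x) := by
      have := key₂ n (w₁ / lam ^ n) (w₂ / μ ^ n) x hx
      rwa [mul_div_cancel₀ _ hlamn, mul_div_cancel₀ _ hμn] at this
    rw [heq, norm_mul, norm_pow]
    refine mul_le_mul_of_nonneg_left ?_ (by positivity)
    refine hM _ _ _ ?_ ?_ ⟨(hψiter n x hx).1, (hψiter n x hx).2⟩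
    · rw [norm_div, norm_pow]
      rw [div_le_one (by positivity)]; exact h1
    · rw [norm_div, norm_pow]
      rw [div_le_one (by positivity)]; exact h2
  
  -- differentiability of slices
  have hdiffz₁ : ∀ x : ℝ, 0 ≤ x → ∀ z₂ : ℂ, Differentiable ℂ (fun z₁ => ξ₁ z₁ z₂ x) := by
    intro x hx z₂
    exact (hholo₁ x hx).comp (differentiable_id.prodMk (differentiable_const _))
  have hdiffz₂ : ∀ x : ℝ, 0 ≤ x → ∀ z₁ : ℂ, Differentiable ℂ (fun z₂ => ξ₁ z₁ z₂ x) := by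
    intro x hx z₁
    exact (hholo₁ x hx).comp ((differentiable_const _).prodMk differentiable_id)
  have hdiffz₁' : ∀ x : ℝ, 0 ≤ x → ∀ z₂ : ℂ, Differentiable ℂ (fun z₁ => ξ₂ z₁ z₂ x) := by
    intro x hx z₂
    exact (hholo₂ x hx).comp (differentiable_id.prodMk (differentiable_const _))
  have hdiffz₂' : ∀ x : ℝ, 0 ≤ x → ∀ z₁ : ℂ, Differentiable ℂ (fun z₂ => ξ₂ z₁ z₂ x) := by
    intro x hx z₁
    exact (hholo₂ x hx).comp ((differentiable_const _).prodMk differentiable_id)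
  -- continuity of time slices
  have hcslice₁ : ∀ z₁ z₂ : ℂ, ContinuousOn (fun x => ξ₁ z₁ z₂ x) (Set.Ici 0) := by
    intro z₁ z₂
    have hmap : Set.MapsTo (fun x : ℝ => ((z₁, z₂, x) : ℂ × ℂ × ℝ)) (Set.Ici 0)
        (Set.univ ×ˢ Set.univ ×ˢ Set.Ici 0) := fun x hx =>
      ⟨Set.mem_univ _, Set.mem_univ _, hx⟩
    exact hcont₁.comp ((continuous_const.prodMk (continuous_const.prodMk continuous_id)).continuousOn) hmap
  have hcslice₂ : ∀ z₁ z₂ : ℂ, ContinuousOn (fun x => ξ₂ z₁ z₂ x) (Set.Ici 0) := by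
    intro z₁ z₂
    have hmap : Set.MapsTo (fun x : ℝ => ((z₁, z₂, x) : ℂ × ℂ × ℝ)) (Set.Ici 0)
        (Set.univ ×ˢ Set.univ ×ˢ Set.Ici 0) := fun x hx =>
      ⟨Set.mem_univ _, Set.mem_univ _, hx⟩
    exact hcont₂.comp ((continuous_const.prodMk (continuous_const.prodMk continuous_id)).continuousOn) hmap
  -- ξ₁ is affine in z₁
  have haff₁ : ∀ x : ℝ, 0 ≤ x → ∀ z₂ w : ℂ,
      ξ₁ w z₂ x = ξ₁ 0 z₂ x + (ξ₁ 1 z₂ x - ξ₁ 0 z₂ x) * w := by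
    intro x hx z₂
    obtain ⟨M, hM0, hM⟩ := bound₁ x hx
    obtain ⟨n₀, hn₀⟩ : ∃ n₀ : ℕ, ‖z₂‖ ≤ ‖μ‖ ^ n₀ :=
      (pow_unbounded_of_one_lt ‖z₂‖ hμ).imp fun n h => h.le
    have growth : ∀ w : ℂ, ‖ξ₁ w z₂ x‖ ≤
        (‖lam‖ ^ (n₀ + 1) * M) * max 1 ‖w‖ := by
      intro w
      obtain ⟨n₁, h1, h2⟩ := exists_pow_ge_aux hlam1 ‖w‖
      have hw : ‖w‖ ≤ ‖lam‖ ^ (n₀ + n₁) :=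
        le_trans h1 (pow_le_pow_right₀ hlam1.le (by omega))
      have hz : ‖z₂‖ ≤ ‖μ‖ ^ (n₀ + n₁) :=
        le_trans hn₀ (pow_le_pow_right₀ hμ.le (by omega))
      calc ‖ξ₁ w z₂ x‖ ≤ ‖lam‖ ^ (n₀ + n₁) * M := hM _ _ _ hw hz
      _ = ‖lam‖ ^ n₀ * ‖lam‖ ^ n₁ * M := by rw [pow_add]
      _ ≤ ‖lam‖ ^ n₀ * (‖lam‖ * max 1 ‖w‖) * M := by
          refine mul_le_mul_of_nonneg_right (mul_le_mul_of_nonneg_left h2 (by positivity)) hM0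
      _ = (‖lam‖ ^ (n₀ + 1) * M) * max 1 ‖w‖ := by ring
    exact affine_of_linear_growth _ (hdiffz₁ x hx z₂) _ growth
  -- the slope of ξ₁ in z₁ does not depend on z₂
  have hslope₁ : ∀ x : ℝ, 0 ≤ x → ∀ z₂ : ℂ,
      ξ₁ 1 z₂ x - ξ₁ 0 z₂ x = ξ₁ 1 0 x - ξ₁ 0 0 x := by
    intro x hx
    obtain ⟨M, hM0, hM⟩ := bound₁ x hx
    set c : ℂ → ℂ := fun z₂ => ξ₁ 1 z₂ x - ξ₁ 0 z₂ x with hc_def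
    have hcdiff : Differentiable ℂ c := (hdiffz₂ x hx 1).sub (hdiffz₂ x hx 0)
    have hcbdd : ∀ z₂, ‖c z₂‖ ≤ 2 * M := by
      intro z₂
      obtain ⟨n₀, hn₀⟩ : ∃ n₀ : ℕ, ‖z₂‖ ≤ ‖μ‖ ^ n₀ :=
        (pow_unbounded_of_one_lt ‖z₂‖ hμ).imp fun n h => h.le
      have hlamn : (lam : ℂ) ^ n₀ ≠ 0 := pow_ne_zero _ hlam0
      have heq : c z₂ = (ξ₁ (lam ^ n₀) z₂ x - ξ₁ 0 z₂ x) / lam ^ n₀ := by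
        have := haff₁ x hx z₂ (lam ^ n₀)
        rw [hc_def]
        field_simp
        linear_combination -this
      rw [heq]
      have hb1 : ‖ξ₁ (lam ^ n₀) z₂ x‖ ≤ ‖lam‖ ^ n₀ * M := by
        refine hM n₀ _ _ ?_ hn₀
        rw [norm_pow]
      have hb0 : ‖ξ₁ 0 z₂ x‖ ≤ ‖lam‖ ^ n₀ * M := by
        refine hM n₀ _ _ ?_ hn₀
        simp
      rw [norm_div, norm_pow, div_le_iff₀ (by positivity)]
      calc ‖ξ₁ (lam ^ n₀) z₂ x - ξ₁ 0 z₂ x‖ ≤ ‖ξ₁ (lam ^ n₀) z₂ x‖ + ‖ξ₁ 0 z₂ x‖ :=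
        norm_sub_le _ _
      _ ≤ ‖lam‖ ^ n₀ * M + ‖lam‖ ^ n₀ * M := add_le_add hb1 hb0
      _ = 2 * M * ‖lam‖ ^ n₀ := by ring
    intro z₂
    exact const_of_bounded c hcdiff (2 * M) hcbdd z₂
  -- the slope is identically 1
  have hγ : ∀ x : ℝ, 0 ≤ x → ξ₁ 1 0 x - ξ₁ 0 0 x = 1 := by
    have hvan := orbit_vanish φ hφcont hφbij hφ0 hexp 1 (by simp)
      (fun x => ξ₁ 1 0 x - ξ₁ 0 0 x - 1)
      (((hcslice₁ 1 0).sub (hcslice₁ 0 0)).sub continuousOn_const)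
      ?_ (by simp only [hbd₁]; ring)
    · intro x hx
      have := hvan x hx
      linear_combination this
    · intro x hx
      have e1 : ξ₁ lam 0 (φ x) = lam * ξ₁ 1 0 x := by
        have := hL1 1 0 x hx
        simpa using this
      have e3 : ξ₁ 0 0 (φ x) = lam * ξ₁ 0 0 x := by
        have := hL1 0 0 x hx
        simpa using this
      have e2 := haff₁ (φ x) (hφmap x hx) 0 lam
      have key : ξ₁ 1 0 (φ x) - ξ₁ 0 0 (φ x) = ξ₁ 1 0 x - ξ₁ 0 0 x := by
        apply mul_left_cancel₀ hlam0
        linear_combination e1 - e2 - e3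
      rw [one_mul]
      linear_combination key
  -- structure of ξ₁
  have hstruct₁ : ∀ x : ℝ, 0 ≤ x → ∀ z₁ z₂ : ℂ, ξ₁ z₁ z₂ x = z₁ + ξ₁ 0 z₂ x := by
    intro x hx z₁ z₂
    rw [haff₁ x hx z₂ z₁, hslope₁ x hx z₂, hγ x hx]
    ring
  
  -- degree data
  set d : ℝ := Real.log (‖lam‖) / Real.log (‖μ‖) with hd_def
  have hlogμ : 0 < Real.log (‖μ‖) := Real.log_pos hμ
  have hd1 : 1 ≤ d := by
    rw [hd_def, le_div_iff₀ hlogμ, one_mul]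
    exact (Real.log_le_log_iff haμ0 halam0).2 hlamμ
  have hd0 : 0 ≤ d := le_trans zero_le_one hd1
  have hμd : ‖μ‖ ^ d = ‖lam‖ := by
    rw [Real.rpow_def_of_pos haμ0, hd_def, mul_comm, div_mul_cancel₀ _ hlogμ.ne',
      Real.exp_log halam0]
  have hdp : d < (p : ℝ) + 1 := by
    rw [hp]
    exact_mod_cast Nat.lt_floor_add_one d
  -- ξ₁ 0 · x is a polynomial of degree at most p
  have hpoly : ∀ x : ℝ, 0 ≤ x → ∃ c : Fin (p + 1) → ℂ,
      ∀ z : ℂ, ξ₁ 0 z x = ∑ j : Fin (p + 1), c j * z ^ (j : ℕ) := by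
    intro x hx
    obtain ⟨M, hM0, hM⟩ := bound₁ x hx
    have growth : ∀ z : ℂ, ‖ξ₁ 0 z x‖ ≤ (M * ‖lam‖) * (max 1 ‖z‖) ^ d := by
      intro z
      obtain ⟨n, h1, h2⟩ := exists_pow_ge_aux hμ ‖z‖
      have hb : ‖ξ₁ 0 z x‖ ≤ ‖lam‖ ^ n * M := by
        refine hM n _ _ ?_ h1
        simp
      have hpowid : (‖μ‖ ^ n : ℝ) ^ d = ‖lam‖ ^ n := by
        rw [← Real.rpow_natCast (‖μ‖) n, ← Real.rpow_mul haμ0.le, mul_comm,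
          Real.rpow_mul haμ0.le, hμd, Real.rpow_natCast]
      have hstep : (‖lam‖ : ℝ) ^ n ≤ ‖lam‖ * (max 1 ‖z‖) ^ d := by
        rw [← hpowid]
        calc (‖μ‖ ^ n : ℝ) ^ d ≤ (‖μ‖ * max 1 ‖z‖) ^ d :=
          Real.rpow_le_rpow (by positivity) h2 hd0
        _ = ‖μ‖ ^ d * (max 1 ‖z‖) ^ d :=
          Real.mul_rpow haμ0.le (le_trans zero_le_one (le_max_left _ _))
        _ = ‖lam‖ * (max 1 ‖z‖) ^ d := by rw [hμd]
      calc ‖ξ₁ 0 z x‖ ≤ ‖lam‖ ^ n * M := hb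
      _ ≤ (‖lam‖ * (max 1 ‖z‖) ^ d) * M := mul_le_mul_of_nonneg_right hstep hM0
      _ = (M * ‖lam‖) * (max 1 ‖z‖) ^ d := by ring
    exact polyLiouville p d hdp (fun z => ξ₁ 0 z x) (hdiffz₂ x hx 0) _ growth
  -- canonical coefficients via the Vandermonde matrix
  set v : Fin (p + 1) → ℂ := fun k => ((k : ℕ) : ℂ) with hv_def
  have hvinj : Function.Injective v := fun i j h =>
    Fin.val_injective (Nat.cast_injective h)
  set V : Matrix (Fin (p + 1)) (Fin (p + 1)) ℂ := Matrix.vandermonde v with hV_def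
  have hdet : V.det ≠ 0 := Matrix.det_vandermonde_ne_zero_iff.2 hvinj
  set W : Matrix (Fin (p + 1)) (Fin (p + 1)) ℂ := V⁻¹ with hW_def
  set a : Fin (p + 1) → ℝ → ℂ :=
    fun j x => ∑ k : Fin (p + 1), W j k * ξ₁ 0 (v k) x with ha_def
  have hacoeff : ∀ (x : ℝ) (c : Fin (p + 1) → ℂ),
      (∀ z : ℂ, ξ₁ 0 z x = ∑ j : Fin (p + 1), c j * z ^ (j : ℕ)) →
      ∀ j, a j x = c j := by
    intro x c hc j
    have hmv : V.mulVec c = fun k => ξ₁ 0 (v k) x := by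
      funext k
      show (∑ i : Fin (p + 1), V k i * c i) = ξ₁ 0 (v k) x
      rw [hc (v k)]
      refine Finset.sum_congr rfl fun i _ => ?_
      rw [hV_def, Matrix.vandermonde_apply, mul_comm]
    have h1 : a j x = (W.mulVec (V.mulVec c)) j := by
      rw [hmv]
      rfl
    rw [h1, Matrix.mulVec_mulVec, hW_def, Matrix.nonsing_inv_mul V (isUnit_iff_ne_zero.2 hdet),
      Matrix.one_mulVec]
  have hrepr : ∀ x : ℝ, 0 ≤ x → ∀ z : ℂ,
      ξ₁ 0 z x = ∑ j : Fin (p + 1), a j x * z ^ (j : ℕ) := by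
    intro x hx z
    obtain ⟨c, hc⟩ := hpoly x hx
    rw [hc z]
    exact Finset.sum_congr rfl fun j _ => by rw [hacoeff x c hc j]
  -- functional equation for the coefficients
  have hafun : ∀ j : Fin (p + 1), ∀ x : ℝ, 0 ≤ x →
      a j (φ x) = (lam / μ ^ (j : ℕ)) * a j x := by
    intro j x hx
    have hrel : ∀ z : ℂ, ξ₁ 0 (μ * z) (φ x) = lam * ξ₁ 0 z x := by
      intro z
      have := hL1 0 z x hx
      simpa using this
    have hzero : (fun i : Fin (p + 1) =>
        a i (φ x) * μ ^ (i : ℕ) - lam * a i x) = 0 := by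
      refine Matrix.eq_zero_of_forall_index_sum_mul_pow_eq_zero hvinj fun k => ?_
      have e1 := hrepr (φ x) (hφmap x hx) (μ * v k)
      have e2 := hrepr x hx (v k)
      have e3 := hrel (v k)
      rw [e1, e2] at e3
      have hterm : ∀ i : Fin (p + 1),
          (a i (φ x) * μ ^ (i : ℕ) - lam * a i x) * (v k) ^ (i : ℕ)
          = a i (φ x) * (μ * v k) ^ (i : ℕ) - lam * (a i x * (v k) ^ (i : ℕ)) := by
        intro i
        rw [mul_pow]
        ring
      rw [Finset.sum_congr rfl fun i _ => hterm i, Finset.sum_sub_distrib,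
        ← Finset.mul_sum, e3, sub_self]
    have hj := congrFun hzero j
    simp only [Pi.zero_apply, sub_eq_zero] at hj
    have hμj : (μ : ℂ) ^ (j : ℕ) ≠ 0 := pow_ne_zero _ hμ0
    field_simp
    linear_combination hj
  have ha0 : ∀ j : Fin (p + 1), a j 0 = 0 := by
    intro j
    rw [ha_def]
    simp only [hbd₁]
    simp
  have hacont : ∀ j : Fin (p + 1), ContinuousOn (a j) (Set.Ici 0) := by
    intro j
    rw [ha_def]
    exact continuousOn_finset_sum _ fun k _ => continuousOn_const.mul (hcslice₁ 0 (v k))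
  
  -- ξ₂ is affine in z₁
  have haff₂ : ∀ x : ℝ, 0 ≤ x → ∀ z₂ w : ℂ,
      ξ₂ w z₂ x = ξ₂ 0 z₂ x + (ξ₂ 1 z₂ x - ξ₂ 0 z₂ x) * w := by
    intro x hx z₂
    obtain ⟨M, hM0, hM⟩ := bound₂ x hx
    obtain ⟨n₀, hn₀⟩ : ∃ n₀ : ℕ, ‖z₂‖ ≤ ‖μ‖ ^ n₀ :=
      (pow_unbounded_of_one_lt ‖z₂‖ hμ).imp fun n h => h.le
    have growth : ∀ w : ℂ, ‖ξ₂ w z₂ x‖ ≤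
        (‖lam‖ ^ (n₀ + 1) * M) * max 1 ‖w‖ := by
      intro w
      obtain ⟨n₁, h1, h2⟩ := exists_pow_ge_aux hlam1 ‖w‖
      have hw : ‖w‖ ≤ ‖lam‖ ^ (n₀ + n₁) :=
        le_trans h1 (pow_le_pow_right₀ hlam1.le (by omega))
      have hz : ‖z₂‖ ≤ ‖μ‖ ^ (n₀ + n₁) :=
        le_trans hn₀ (pow_le_pow_right₀ hμ.le (by omega))
      calc ‖ξ₂ w z₂ x‖ ≤ ‖μ‖ ^ (n₀ + n₁) * M := hM _ _ _ hw hz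
      _ ≤ ‖lam‖ ^ (n₀ + n₁) * M :=
          mul_le_mul_of_nonneg_right (pow_le_pow_left₀ haμ0.le hlamμ _) hM0
      _ = ‖lam‖ ^ n₀ * ‖lam‖ ^ n₁ * M := by rw [pow_add]
      _ ≤ ‖lam‖ ^ n₀ * (‖lam‖ * max 1 ‖w‖) * M := by
          refine mul_le_mul_of_nonneg_right (mul_le_mul_of_nonneg_left h2 (by positivity)) hM0
      _ = (‖lam‖ ^ (n₀ + 1) * M) * max 1 ‖w‖ := by ring
    exact affine_of_linear_growth _ (hdiffz₁' x hx z₂) _ growth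
  -- the slope of ξ₂ in z₁ does not depend on z₂
  have hslope₂ : ∀ x : ℝ, 0 ≤ x → ∀ z₂ : ℂ,
      ξ₂ 1 z₂ x - ξ₂ 0 z₂ x = ξ₂ 1 0 x - ξ₂ 0 0 x := by
    intro x hx
    obtain ⟨M, hM0, hM⟩ := bound₂ x hx
    set c : ℂ → ℂ := fun z₂ => ξ₂ 1 z₂ x - ξ₂ 0 z₂ x with hc_def
    have hcdiff : Differentiable ℂ c := (hdiffz₂' x hx 1).sub (hdiffz₂' x hx 0)
    have hcbdd : ∀ z₂, ‖c z₂‖ ≤ 2 * M := by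
      intro z₂
      obtain ⟨n₀, hn₀⟩ : ∃ n₀ : ℕ, ‖z₂‖ ≤ ‖μ‖ ^ n₀ :=
        (pow_unbounded_of_one_lt ‖z₂‖ hμ).imp fun n h => h.le
      have hlamn : (lam : ℂ) ^ n₀ ≠ 0 := pow_ne_zero _ hlam0
      have heq : c z₂ = (ξ₂ (lam ^ n₀) z₂ x - ξ₂ 0 z₂ x) / lam ^ n₀ := by
        have := haff₂ x hx z₂ (lam ^ n₀)
        rw [hc_def]
        field_simp
        linear_combination -this
      rw [heq]
      have hb1 : ‖ξ₂ (lam ^ n₀) z₂ x‖ ≤ ‖μ‖ ^ n₀ * M := by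
        refine hM n₀ _ _ ?_ hn₀
        rw [norm_pow]
      have hb0 : ‖ξ₂ 0 z₂ x‖ ≤ ‖μ‖ ^ n₀ * M := by
        refine hM n₀ _ _ ?_ hn₀
        simp
      rw [norm_div, norm_pow, div_le_iff₀ (by positivity)]
      calc ‖ξ₂ (lam ^ n₀) z₂ x - ξ₂ 0 z₂ x‖ ≤ ‖ξ₂ (lam ^ n₀) z₂ x‖ + ‖ξ₂ 0 z₂ x‖ :=
        norm_sub_le _ _
      _ ≤ ‖μ‖ ^ n₀ * M + ‖μ‖ ^ n₀ * M := add_le_add hb1 hb0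
      _ ≤ ‖lam‖ ^ n₀ * M + ‖lam‖ ^ n₀ * M := by
          have := mul_le_mul_of_nonneg_right (pow_le_pow_left₀ haμ0.le hlamμ n₀) hM0
          linarith
      _ = 2 * M * ‖lam‖ ^ n₀ := by ring
    intro z₂
    exact const_of_bounded c hcdiff (2 * M) hcbdd z₂
  -- the slope of ξ₂ in z₁ vanishes
  have he0 : ∀ x : ℝ, 0 ≤ x → ξ₂ 1 0 x - ξ₂ 0 0 x = 0 := by
    have habsκ : ‖μ / lam‖ ≤ 1 := by
      rw [norm_div, div_le_one halam0]
      exact hlamμ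
    have hvan := orbit_vanish φ hφcont hφbij hφ0 hexp (μ / lam) habsκ
      (fun x => ξ₂ 1 0 x - ξ₂ 0 0 x)
      ((hcslice₂ 1 0).sub (hcslice₂ 0 0))
      ?_ (by simp only [hbd₂]; ring)
    · exact hvan
    · intro x hx
      have e1 : ξ₂ lam 0 (φ x) = μ * ξ₂ 1 0 x := by
        have := hL2 1 0 x hx
        simpa using this
      have e3 : ξ₂ 0 0 (φ x) = μ * ξ₂ 0 0 x := by
        have := hL2 0 0 x hx
        simpa using this
      have e2 := haff₂ (φ x) (hφmap x hx) 0 lam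
      have key : lam * (ξ₂ 1 0 (φ x) - ξ₂ 0 0 (φ x)) = μ * (ξ₂ 1 0 x - ξ₂ 0 0 x) := by
        linear_combination e1 - e2 - e3
      show ξ₂ 1 0 (φ x) - ξ₂ 0 0 (φ x) = μ / lam * (ξ₂ 1 0 x - ξ₂ 0 0 x)
      field_simp
      linear_combination key
  have hindep₂ : ∀ x : ℝ, 0 ≤ x → ∀ z₁ z₂ : ℂ, ξ₂ z₁ z₂ x = ξ₂ 0 z₂ x := by
    intro x hx z₁ z₂
    rw [haff₂ x hx z₂ z₁, hslope₂ x hx z₂, he0 x hx]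
    ring
  -- ξ₂ is affine in z₂
  have haffz₂ : ∀ x : ℝ, 0 ≤ x → ∀ z : ℂ,
      ξ₂ 0 z x = ξ₂ 0 0 x + (ξ₂ 0 1 x - ξ₂ 0 0 x) * z := by
    intro x hx
    obtain ⟨M, hM0, hM⟩ := bound₂ x hx
    have growth : ∀ z : ℂ, ‖ξ₂ 0 z x‖ ≤ (M * ‖μ‖) * max 1 ‖z‖ := by
      intro z
      obtain ⟨n, h1, h2⟩ := exists_pow_ge_aux hμ ‖z‖
      calc ‖ξ₂ 0 z x‖ ≤ ‖μ‖ ^ n * M := by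
            refine hM n _ _ ?_ h1
            simp
      _ ≤ (‖μ‖ * max 1 ‖z‖) * M := mul_le_mul_of_nonneg_right h2 hM0
      _ = (M * ‖μ‖) * max 1 ‖z‖ := by ring
    exact affine_of_linear_growth _ (hdiffz₂' x hx 0) _ growth
  -- the slope of ξ₂ in z₂ is identically 1
  have hτ : ∀ x : ℝ, 0 ≤ x → ξ₂ 0 1 x - ξ₂ 0 0 x = 1 := by
    have hvan := orbit_vanish φ hφcont hφbij hφ0 hexp 1 (by simp)
      (fun x => ξ₂ 0 1 x - ξ₂ 0 0 x - 1)
      (((hcslice₂ 0 1).sub (hcslice₂ 0 0)).sub continuousOn_const)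
      ?_ (by simp only [hbd₂]; ring)
    · intro x hx
      have := hvan x hx
      linear_combination this
    · intro x hx
      have e1 : ξ₂ 0 μ (φ x) = μ * ξ₂ 0 1 x := by
        have := hL2 0 1 x hx
        simpa using this
      have e3 : ξ₂ 0 0 (φ x) = μ * ξ₂ 0 0 x := by
        have := hL2 0 0 x hx
        simpa using this
      have e2 := haffz₂ (φ x) (hφmap x hx) μ
      have key : ξ₂ 0 1 (φ x) - ξ₂ 0 0 (φ x) = ξ₂ 0 1 x - ξ₂ 0 0 x := by
        apply mul_left_cancel₀ hμ0
        linear_combination e1 - e2 - e3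
      show ξ₂ 0 1 (φ x) - ξ₂ 0 0 (φ x) - 1 = 1 * (ξ₂ 0 1 x - ξ₂ 0 0 x - 1)
      rw [one_mul]
      linear_combination key
  have hstruct₂ : ∀ x : ℝ, 0 ≤ x → ∀ z₁ z₂ : ℂ, ξ₂ z₁ z₂ x = z₂ + ξ₂ 0 0 x := by
    intro x hx z₁ z₂
    rw [hindep₂ x hx z₁ z₂, haffz₂ x hx z₂, hτ x hx]
    ring
  -- final assembly
  refine ⟨a, fun x => ξ₂ 0 0 x, hacont, hcslice₂ 0 0, ha0, by simp [hbd₂], hafun, ?_, ?_⟩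
  · intro x hx
    have := hL2 0 0 x hx
    simpa using this
  · intro z₁ z₂ x hx
    exact ⟨by rw [hstruct₁ x hx z₁ z₂, hrepr x hx z₂], hstruct₂ x hx z₁ z₂⟩
end

section
/- Let λ ∈ ℂ with |λ| > 1. Suppose ξ₁, ξ₂ : ℂ² × [0,∞) → ℂ are as in the context and satisfy ξ₁(λz₁ + z₂, λz₂, φ(x)) = λ·ξ₁(z₁,z₂,x) + ξ₂(z₁,z₂,x) and ξ₂(λz₁ + z₂, λz₂, φ(x)) = λ·ξ₂(z₁,z₂,x) for all (z₁,z₂) ∈ ℂ² and x ≥ 0. Then there exist continuous functions a₁, a₂ : [0,∞) → ℂ with a₁(0) = a₂(0) = 0 satisfying a₁(φ(x)) = λ·a₁(x) + a₂(x) and a₂(φ(x)) = λ·a₂(x), such that ξ₁(z₁,z₂,x) = z₁ + a₁(x) and ξ₂(z₁,z₂,x) = z₂ + a₂(x). (Classification in Case 4 of Section 3.2, underlying Theorem 3.12) -/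
open Filter Metric Set Topology

private lemma case4_seq_exists (φ : ℝ → ℝ)
    (hφcont : ContinuousOn φ (Set.Ici 0))
    (hφbij : Set.BijOn φ (Set.Ici 0) (Set.Ici 0))
    (hφ0 : φ 0 = 0)
    (hexp : ∀ x : ℝ, 0 < x → x < φ x)
    (x : ℝ) (hx : 0 ≤ x) :
    ∃ u : ℕ → ℝ, u 0 = x ∧ (∀ n, 0 ≤ u n) ∧ (∀ n, φ (u (n + 1)) = u n) ∧
      Tendsto u atTop (𝓝 0) := by
  have hsur : ∀ y : ℝ, ∃ a, 0 ≤ a ∧ (0 ≤ y → φ a = y) := by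
    intro y
    by_cases hy : 0 ≤ y
    · obtain ⟨a, ha, hfa⟩ := hφbij.surjOn hy
      exact ⟨a, ha, fun _ => hfa⟩
    · exact ⟨0, le_refl 0, fun h => absurd h hy⟩
  choose ψ hψ0 hψφ using hsur
  set u : ℕ → ℝ := fun n => ψ^[n] x with hu
  have hpos : ∀ n, 0 ≤ u n := by
    intro n
    induction n with
    | zero => exact hx
    | succ n ih => show 0 ≤ ψ^[n+1] x; rw [Function.iterate_succ_apply']; exact hψ0 _
  have hrec : ∀ n, φ (u (n + 1)) = u n := by
    intro n
    have : u (n + 1) = ψ (u n) := Function.iterate_succ_apply' ψ n x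
    rw [this]
    exact hψφ _ (hpos n)
  have hanti : Antitone u := by
    apply antitone_nat_of_succ_le
    intro n
    rcases (hpos (n + 1)).lt_or_eq with h | h
    · calc u (n + 1) ≤ φ (u (n + 1)) := (hexp _ h).le
        _ = u n := hrec n
    · have : u n = φ (u (n + 1)) := (hrec n).symm
      rw [this, ← h, hφ0]
  have hbdd : BddBelow (Set.range u) := ⟨0, by rintro y ⟨n, rfl⟩; exact hpos n⟩
  have hlim := tendsto_atTop_ciInf hanti hbdd
  set L := ⨅ n, u n with hL
  have hL0 : 0 ≤ L := le_ciInf hpos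
  have hLfix : φ L = L := by
    have h1 : Tendsto (fun n => u (n + 1)) atTop (𝓝 L) := hlim.comp (tendsto_add_atTop_nat 1)
    have h1' : Tendsto (fun n => u (n + 1)) atTop (𝓝[Set.Ici 0] L) :=
      tendsto_nhdsWithin_of_tendsto_nhds_of_eventually_within _ h1
        (Eventually.of_forall fun n => hpos (n + 1))
    have h2 : Tendsto (fun n => φ (u (n + 1))) atTop (𝓝 (φ L)) :=
      (hφcont L hL0).tendsto.comp h1'
    have h3 : Tendsto (fun n => φ (u (n + 1))) atTop (𝓝 L) := by
      simpa only [hrec] using hlim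
    exact tendsto_nhds_unique h2 h3
  have hL00 : L = 0 := by
    rcases hL0.lt_or_eq with h | h
    · exact absurd hLfix (ne_of_gt (hexp L h))
    · exact h.symm
  rw [hL00] at hlim
  exact ⟨u, rfl, hpos, hrec, hlim⟩

private lemma case4_iter_eq (lam : ℂ) (hlam0 : lam ≠ 0) (φ : ℝ → ℝ) (H : ℂ → ℂ → ℝ → ℂ)
    (heq : ∀ z₁ z₂ : ℂ, ∀ x : ℝ, 0 ≤ x →
      H (lam * z₁ + z₂) (lam * z₂) (φ x) = lam * H z₁ z₂ x)
    (u : ℕ → ℝ) (hpos : ∀ n, 0 ≤ u n) (hrec : ∀ n, φ (u (n + 1)) = u n) :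
    ∀ (w₁ w₂ : ℂ) (n : ℕ),
      H w₁ w₂ (u 0) = lam ^ n * H ((w₁ - (n : ℂ) * w₂ / lam) / lam ^ n) (w₂ / lam ^ n) (u n) := by
  intro w₁ w₂ n
  induction n with
  | zero => simp
  | succ n ih =>
    rw [ih]
    have e1 : ((w₁ - (n : ℂ) * w₂ / lam) / lam ^ n)
        = lam * ((w₁ - ((n : ℂ) + 1) * w₂ / lam) / lam ^ (n + 1)) + w₂ / lam ^ (n + 1) := by
      field_simp
      ring
    have e2 : (w₂ / lam ^ n) = lam * (w₂ / lam ^ (n + 1)) := by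
      field_simp
      ring
    rw [e1, e2, ← hrec n, heq _ _ _ (hpos (n + 1))]
    push_cast
    ring

private lemma case4_small_diff (lam : ℂ) (hlam : 1 < ‖lam‖)
    (g : ℕ → ℂ → ℂ) (hg : ∀ n, Differentiable ℂ (g n)) (t : ℂ) (Δ : ℂ)
    (hΔ : ∀ n : ℕ, Δ = lam ^ n * (g n (t / lam ^ n) - g n 0))
    (hsmall : ∀ ε : ℝ, 0 < ε → ∀ᶠ n in atTop, ∀ w ∈ Metric.ball (0 : ℂ) 1, ‖g n w‖ ≤ ε) :
    Δ = 0 := by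
  have hlam0 : lam ≠ 0 := by
    intro h
    rw [h] at hlam
    simp at hlam
    linarith
  have key : ∀ ε : ℝ, 0 < ε → ‖Δ‖ ≤ ε * (3 * ‖t‖) := by
    intro ε hε
    have h1 := hsmall ε hε
    have h2 : Tendsto (fun n : ℕ => t / lam ^ n) atTop (𝓝 0) := by
      have hinv : ‖lam⁻¹‖ < 1 := by
        rw [norm_inv]
        apply inv_lt_one_of_one_lt₀
        simpa using hlam
      have := (tendsto_pow_atTop_nhds_zero_of_norm_lt_one hinv).const_mul t
      simpa [div_eq_mul_inv, inv_pow] using this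
    have h3 : ∀ᶠ n : ℕ in atTop, ‖t / lam ^ n‖ < 1 := by
      filter_upwards [h2.eventually (Metric.ball_mem_nhds (0 : ℂ) one_pos)] with n hn
      simpa [mem_ball_zero_iff] using hn
    obtain ⟨n, hn1, hn2⟩ := (h1.and h3).exists
    have hmaps : Set.MapsTo (g n) (ball (0 : ℂ) 1) (ball (g n 0) (3 * ε)) := by
      intro w hw
      rw [mem_ball, dist_eq_norm]
      calc ‖g n w - g n 0‖ ≤ ‖g n w‖ + ‖g n 0‖ := norm_sub_le _ _
        _ ≤ ε + ε := add_le_add (hn1 w hw) (hn1 0 (mem_ball_self one_pos))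
        _ < 3 * ε := by linarith
    have hd : DifferentiableOn ℂ (g n) (ball (0 : ℂ) 1) := (hg n).differentiableOn
    have hz : t / lam ^ n ∈ ball (0 : ℂ) 1 := mem_ball_zero_iff.mpr hn2
    have hschwarz := Complex.dist_le_div_mul_dist_of_mapsTo_ball hd (hmaps.mono_right ball_subset_closedBall) hz
    rw [hΔ n, norm_mul, norm_pow]
    have e1 : ‖g n (t / lam ^ n) - g n 0‖ = dist (g n (t / lam ^ n)) (g n 0) :=
      (dist_eq_norm _ _).symm
    have e2 : dist (t / lam ^ n) 0 = ‖t‖ / ‖lam‖ ^ n := by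
      rw [dist_zero_right, norm_div, norm_pow]
    have hpow : (0 : ℝ) < ‖lam‖ ^ n := by
      apply pow_pos
      linarith
    calc ‖lam‖ ^ n * ‖g n (t / lam ^ n) - g n 0‖
        ≤ ‖lam‖ ^ n * (3 * ε / 1 * (‖t‖ / ‖lam‖ ^ n)) := by
          rw [e1]
          apply mul_le_mul_of_nonneg_left _ hpow.le
          rw [← e2]
          exact hschwarz
      _ = ε * (3 * ‖t‖) := by field_simp
  by_cases ht : t = 0
  · have := hΔ 0
    simpa [ht] using this
  · rw [← norm_eq_zero]
    by_contra h
    have hpos : 0 < ‖Δ‖ := lt_of_le_of_ne (norm_nonneg _) (Ne.symm h)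
    have htn : t ≠ 0 := ht
    have htpos : 0 < 3 * ‖t‖ := by
      have : 0 < ‖t‖ := norm_pos_iff.mpr htn
      linarith
    have := key (‖Δ‖ / (2 * (3 * ‖t‖))) (by positivity)
    rw [div_mul_eq_mul_div, mul_comm] at this
    have : ‖Δ‖ ≤ ‖Δ‖ / 2 := by
      calc ‖Δ‖ ≤ 3 * ‖t‖ * ‖Δ‖ / (2 * (3 * ‖t‖)) := this
        _ = ‖Δ‖ / 2 := by
          rw [mul_comm (3 * ‖t‖) ‖Δ‖, mul_div_assoc, mul_comm 2 (3 * ‖t‖), div_mul_eq_div_div, div_self htpos.ne', one_div, ← div_eq_mul_inv]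
    linarith

private lemma case4_unif_small (H : ℂ → ℂ → ℝ → ℂ)
    (hcont : ContinuousOn (fun q : ℂ × ℂ × ℝ => H q.1 q.2.1 q.2.2)
      (Set.univ ×ˢ Set.univ ×ˢ Set.Ici 0))
    (hb : ∀ z₁ z₂ : ℂ, H z₁ z₂ 0 = 0)
    (u : ℕ → ℝ) (hpos : ∀ n, 0 ≤ u n) (hlim : Tendsto u atTop (𝓝 0))
    {K : Set (ℂ × ℂ)} (hK : IsCompact K) {ε : ℝ} (hε : 0 < ε) :
    ∀ᶠ n in atTop, ∀ z ∈ K, ‖H z.1 z.2 (u n)‖ ≤ ε := by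
  set F : ℝ → ℂ × ℂ → ℂ := fun y z => H z.1 z.2 y with hF
  have hUC : UniformContinuousOn (↿F) (Set.Icc (0 : ℝ) 1 ×ˢ K) := by
    apply (isCompact_Icc.prod hK).uniformContinuousOn_of_continuous
    have hmap : Continuous (fun q : ℝ × (ℂ × ℂ) => (q.2.1, q.2.2, q.1)) := by fun_prop
    have h2 := hcont.comp (hmap.continuousOn (s := Set.Icc (0 : ℝ) 1 ×ˢ K))
      (by
        rintro ⟨y, z⟩ ⟨hy, hz⟩
        exact ⟨Set.mem_univ _, Set.mem_univ _, hy.1⟩)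
    exact h2
  have hTU : TendstoUniformlyOn F (F 0) (𝓝[Set.Icc (0 : ℝ) 1] 0) K :=
    hUC.tendstoUniformlyOn ⟨le_refl 0, zero_le_one⟩
  have hu' : Tendsto u atTop (𝓝[Set.Icc (0 : ℝ) 1] 0) := by
    apply tendsto_nhdsWithin_of_tendsto_nhds_of_eventually_within _ hlim
    filter_upwards [hlim.eventually (eventually_le_nhds zero_lt_one)] with n hn
    exact ⟨hpos n, hn⟩
  rw [tendstoUniformlyOn_iff] at hTU
  filter_upwards [hu'.eventually (hTU ε hε)] with n hn z hz
  have := hn z hz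
  simp only [hF, hb, dist_eq_norm, zero_sub, norm_neg] at this
  exact this.le

private lemma case4_tend_aux (lam : ℂ) (hlam : 1 < ‖lam‖) (c : ℂ) :
    Tendsto (fun n : ℕ => c / lam ^ n) atTop (𝓝 0) := by
  have hinv : ‖lam⁻¹‖ < 1 := by
    rw [norm_inv]
    apply inv_lt_one_of_one_lt₀
    simpa using hlam
  have := (tendsto_pow_atTop_nhds_zero_of_norm_lt_one hinv).const_mul c
  simpa [div_eq_mul_inv, inv_pow] using this

private lemma case4_tend_aux2 (lam : ℂ) (hlam : 1 < ‖lam‖) (c : ℂ) :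
    Tendsto (fun n : ℕ => ‖(0 - (n : ℂ) * c / lam) / lam ^ n‖) atTop (𝓝 0) := by
  have hr0 : (0 : ℝ) ≤ ‖lam‖⁻¹ := by positivity
  have hr1 : ‖lam‖⁻¹ < 1 := by
    apply inv_lt_one_of_one_lt₀
    simpa using hlam
  have h := (tendsto_pow_const_mul_const_pow_of_lt_one 1 hr0 hr1).const_mul ‖c / lam‖
  rw [mul_zero] at h
  apply squeeze_zero (fun n => norm_nonneg _) _ h
  intro n
  apply le_of_eq
  rw [zero_sub, neg_div, norm_neg, mul_div_assoc, norm_div, norm_mul, Complex.norm_natCast,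
    norm_pow, pow_one, div_eq_mul_inv, ← inv_pow]
  ring

set_option maxHeartbeats 1000000 in
private lemma case4_stepA (lam : ℂ) (hlam : 1 < ‖lam‖) (φ : ℝ → ℝ)
    (hφcont : ContinuousOn φ (Set.Ici 0))
    (hφbij : Set.BijOn φ (Set.Ici 0) (Set.Ici 0))
    (hφ0 : φ 0 = 0)
    (hexp : ∀ x : ℝ, 0 < x → x < φ x)
    (H : ℂ → ℂ → ℝ → ℂ)
    (hcont : ContinuousOn (fun q : ℂ × ℂ × ℝ => H q.1 q.2.1 q.2.2)
      (Set.univ ×ˢ Set.univ ×ˢ Set.Ici 0))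
    (hholo : ∀ x : ℝ, 0 ≤ x → Differentiable ℂ (fun z : ℂ × ℂ => H z.1 z.2 x))
    (hb : ∀ z₁ z₂ : ℂ, H z₁ z₂ 0 = 0)
    (heq : ∀ z₁ z₂ : ℂ, ∀ x : ℝ, 0 ≤ x →
      H (lam * z₁ + z₂) (lam * z₂) (φ x) = lam * H z₁ z₂ x) :
    ∀ (x : ℝ), 0 ≤ x → ∀ w₁ w₂ : ℂ, H w₁ w₂ x = H 0 w₂ x := by
  have hlam0 : lam ≠ 0 := by
    intro h
    rw [h] at hlam
    simp at hlam
    linarith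
  intro x hx w₁ w₂
  obtain ⟨u, hu0, hpos, hrec, hlim⟩ := case4_seq_exists φ hφcont hφbij hφ0 hexp x hx
  have hiter := case4_iter_eq lam hlam0 φ H heq u hpos hrec
  set g : ℕ → ℂ → ℂ :=
    fun n w => H ((0 - (n : ℂ) * w₂ / lam) / lam ^ n + w) (w₂ / lam ^ n) (u n) with hgdef
  have hg : ∀ n, Differentiable ℂ (g n) := by
    intro n
    have hd := hholo (u n) (hpos n)
    have : Differentiable ℂ (fun w : ℂ =>
        (((0 - (n : ℂ) * w₂ / lam) / lam ^ n + w, w₂ / lam ^ n) : ℂ × ℂ)) := by fun_prop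
    exact hd.comp this
  have hΔ : ∀ n : ℕ, H w₁ w₂ x - H 0 w₂ x = lam ^ n * (g n (w₁ / lam ^ n) - g n 0) := by
    intro n
    have e : ((w₁ - (n : ℂ) * w₂ / lam) / lam ^ n)
        = (0 - (n : ℂ) * w₂ / lam) / lam ^ n + w₁ / lam ^ n := by ring
    rw [← hu0, hiter w₁ w₂ n, hiter 0 w₂ n]
    simp only [hgdef]
    rw [e, add_zero]
    ring
  have hsmall : ∀ ε : ℝ, 0 < ε → ∀ᶠ n in atTop, ∀ w ∈ Metric.ball (0 : ℂ) 1, ‖g n w‖ ≤ ε := by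
    intro ε hε
    have h1 := case4_unif_small H hcont hb u hpos hlim
      ((isCompact_closedBall (0 : ℂ) 2).prod (isCompact_closedBall (0 : ℂ) 2)) hε
    have h2 := (case4_tend_aux2 lam hlam w₂).eventually (eventually_le_nhds zero_lt_one)
    have h3 := (case4_tend_aux lam hlam w₂).eventually
      (Metric.closedBall_mem_nhds (0 : ℂ) zero_lt_two)
    filter_upwards [h1, h2, h3] with n hn hb1 hb2 w hw
    have hmem : (((0 - (n : ℂ) * w₂ / lam) / lam ^ n + w, w₂ / lam ^ n) : ℂ × ℂ) ∈
        Metric.closedBall (0 : ℂ) 2 ×ˢ Metric.closedBall (0 : ℂ) 2 := by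
      constructor
      · rw [Metric.mem_closedBall, dist_zero_right]
        calc ‖(0 - (n : ℂ) * w₂ / lam) / lam ^ n + w‖
            ≤ ‖(0 - (n : ℂ) * w₂ / lam) / lam ^ n‖ + ‖w‖ := norm_add_le _ _
          _ ≤ 1 + 1 := add_le_add hb1 (le_of_lt (mem_ball_zero_iff.mp hw))
          _ = 2 := by norm_num
      · exact hb2
    simpa [hgdef] using hn _ hmem
  have := case4_small_diff lam hlam g hg w₁ (H w₁ w₂ x - H 0 w₂ x) hΔ hsmall
  exact sub_eq_zero.mp this

set_option maxHeartbeats 1000000 in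
private lemma case4_vanish (lam : ℂ) (hlam : 1 < ‖lam‖) (φ : ℝ → ℝ)
    (hφcont : ContinuousOn φ (Set.Ici 0))
    (hφbij : Set.BijOn φ (Set.Ici 0) (Set.Ici 0))
    (hφ0 : φ 0 = 0)
    (hexp : ∀ x : ℝ, 0 < x → x < φ x)
    (H : ℂ → ℂ → ℝ → ℂ)
    (hcont : ContinuousOn (fun q : ℂ × ℂ × ℝ => H q.1 q.2.1 q.2.2)
      (Set.univ ×ˢ Set.univ ×ˢ Set.Ici 0))
    (hholo : ∀ x : ℝ, 0 ≤ x → Differentiable ℂ (fun z : ℂ × ℂ => H z.1 z.2 x))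
    (hb : ∀ z₁ z₂ : ℂ, H z₁ z₂ 0 = 0)
    (h0 : ∀ x : ℝ, 0 ≤ x → H 0 0 x = 0)
    (heq : ∀ z₁ z₂ : ℂ, ∀ x : ℝ, 0 ≤ x →
      H (lam * z₁ + z₂) (lam * z₂) (φ x) = lam * H z₁ z₂ x) :
    ∀ (z₁ z₂ : ℂ) (x : ℝ), 0 ≤ x → H z₁ z₂ x = 0 := by
  have hlam0 : lam ≠ 0 := by
    intro h
    rw [h] at hlam
    simp at hlam
    linarith
  have hA := case4_stepA lam hlam φ hφcont hφbij hφ0 hexp H hcont hholo hb heq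
  intro z₁ z₂ x hx
  rw [hA x hx z₁ z₂]
  obtain ⟨u, hu0, hpos, hrec, hlim⟩ := case4_seq_exists φ hφcont hφbij hφ0 hexp x hx
  have hiter := case4_iter_eq lam hlam0 φ H heq u hpos hrec
  set g : ℕ → ℂ → ℂ := fun n w => H 0 w (u n) with hgdef
  have hg : ∀ n, Differentiable ℂ (g n) := by
    intro n
    have hd := hholo (u n) (hpos n)
    have hm : Differentiable ℂ (fun w : ℂ => ((0 : ℂ), w)) := by fun_prop
    exact hd.comp hm
  have hΔ : ∀ n : ℕ, H 0 z₂ x - 0 = lam ^ n * (g n (z₂ / lam ^ n) - g n 0) := by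
    intro n
    rw [← hu0, hiter 0 z₂ n, hA (u n) (hpos n) ((0 - (n : ℂ) * z₂ / lam) / lam ^ n) (z₂ / lam ^ n)]
    simp only [hgdef, h0 (u n) (hpos n), sub_zero]
  have hsmall : ∀ ε : ℝ, 0 < ε → ∀ᶠ n in atTop, ∀ w ∈ Metric.ball (0 : ℂ) 1, ‖g n w‖ ≤ ε := by
    intro ε hε
    have h1 := case4_unif_small H hcont hb u hpos hlim
      ((isCompact_closedBall (0 : ℂ) 2).prod (isCompact_closedBall (0 : ℂ) 2)) hε
    filter_upwards [h1] with n hn w hw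
    have hmem : (((0 : ℂ), w) : ℂ × ℂ) ∈
        Metric.closedBall (0 : ℂ) 2 ×ˢ Metric.closedBall (0 : ℂ) 2 := by
      constructor
      · simp
      · rw [Metric.mem_closedBall, dist_zero_right]
        have := mem_ball_zero_iff.mp hw
        linarith
    simpa [hgdef] using hn _ hmem
  have := case4_small_diff lam hlam g hg z₂ (H 0 z₂ x - 0) hΔ hsmall
  simpa using this

set_option maxHeartbeats 1000000 in
/-- Case 4 of Section 3.2 (underlying Theorem 3.12): for `G(z₁,z₂) = (λz₁ + z₂, λz₂)`
with `|λ| > 1`, any leafwise-holomorphic lift `(ξ₁, ξ₂)` restricting to the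
identity on the boundary and equivariant for `T` has the form `ξ₁ = z₁ + a₁(x)`,
`ξ₂ = z₂ + a₂(x)` with `(a₁, a₂) ∈ 𝒮_{φ,λ}`. -/
theorem case_4_classification (lam : ℂ) (hlam : 1 < ‖lam‖)
    (φ : ℝ → ℝ)
    (hφcont : ContinuousOn φ (Set.Ici 0))
    (hφmono : StrictMonoOn φ (Set.Ici 0))
    (hφbij : Set.BijOn φ (Set.Ici 0) (Set.Ici 0))
    (hφ0 : φ 0 = 0)
    (hexp : ∀ x : ℝ, 0 < x → x < φ x)
    (ξ₁ ξ₂ : ℂ → ℂ → ℝ → ℂ)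
    (hcont₁ : ContinuousOn (fun q : ℂ × ℂ × ℝ => ξ₁ q.1 q.2.1 q.2.2)
      (Set.univ ×ˢ Set.univ ×ˢ Set.Ici 0))
    (hcont₂ : ContinuousOn (fun q : ℂ × ℂ × ℝ => ξ₂ q.1 q.2.1 q.2.2)
      (Set.univ ×ˢ Set.univ ×ˢ Set.Ici 0))
    (hholo₁ : ∀ x : ℝ, 0 ≤ x → Differentiable ℂ (fun z : ℂ × ℂ => ξ₁ z.1 z.2 x))
    (hholo₂ : ∀ x : ℝ, 0 ≤ x → Differentiable ℂ (fun z : ℂ × ℂ => ξ₂ z.1 z.2 x))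
    (hbd₁ : ∀ z₁ z₂ : ℂ, ξ₁ z₁ z₂ 0 = z₁)
    (hbd₂ : ∀ z₁ z₂ : ℂ, ξ₂ z₁ z₂ 0 = z₂)
    (hL1 : ∀ z₁ z₂ : ℂ, ∀ x : ℝ, 0 ≤ x →
      ξ₁ (lam * z₁ + z₂) (lam * z₂) (φ x) = lam * ξ₁ z₁ z₂ x + ξ₂ z₁ z₂ x)
    (hL2 : ∀ z₁ z₂ : ℂ, ∀ x : ℝ, 0 ≤ x →
      ξ₂ (lam * z₁ + z₂) (lam * z₂) (φ x) = lam * ξ₂ z₁ z₂ x) :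
    ∃ a₁ a₂ : ℝ → ℂ,
      ContinuousOn a₁ (Set.Ici 0) ∧ ContinuousOn a₂ (Set.Ici 0) ∧
      a₁ 0 = 0 ∧ a₂ 0 = 0 ∧
      (∀ x : ℝ, 0 ≤ x → a₁ (φ x) = lam * a₁ x + a₂ x) ∧
      (∀ x : ℝ, 0 ≤ x → a₂ (φ x) = lam * a₂ x) ∧
      ∀ z₁ z₂ : ℂ, ∀ x : ℝ, 0 ≤ x →
        ξ₁ z₁ z₂ x = z₁ + a₁ x ∧ ξ₂ z₁ z₂ x = z₂ + a₂ x := by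
  set a₁ : ℝ → ℂ := fun x => ξ₁ 0 0 x with ha₁
  set a₂ : ℝ → ℂ := fun x => ξ₂ 0 0 x with ha₂
  have hmap : Continuous (fun x : ℝ => (((0 : ℂ), (0 : ℂ), x) : ℂ × ℂ × ℝ)) := by fun_prop
  have hmapsTo : Set.MapsTo (fun x : ℝ => (((0 : ℂ), (0 : ℂ), x) : ℂ × ℂ × ℝ))
      (Set.Ici 0) (Set.univ ×ˢ Set.univ ×ˢ Set.Ici 0) :=
    fun x hx => ⟨Set.mem_univ _, Set.mem_univ _, hx⟩
  have hca₁ : ContinuousOn a₁ (Set.Ici 0) := hcont₁.comp hmap.continuousOn hmapsTo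
  have hca₂ : ContinuousOn a₂ (Set.Ici 0) := hcont₂.comp hmap.continuousOn hmapsTo
  have ha₁0 : a₁ 0 = 0 := by simp [ha₁, hbd₁]
  have ha₂0 : a₂ 0 = 0 := by simp [ha₂, hbd₂]
  have hfa₂ : ∀ x : ℝ, 0 ≤ x → a₂ (φ x) = lam * a₂ x := by
    intro x hx
    have := hL2 0 0 x hx
    simpa [ha₂] using this
  have hfa₁ : ∀ x : ℝ, 0 ≤ x → a₁ (φ x) = lam * a₁ x + a₂ x := by
    intro x hx
    have := hL1 0 0 x hx
    simpa [ha₁, ha₂] using this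
  -- ξ₂
  have hv₂ : ∀ (z₁ z₂ : ℂ) (x : ℝ), 0 ≤ x → ξ₂ z₁ z₂ x - z₂ - a₂ x = 0 := by
    apply case4_vanish lam hlam φ hφcont hφbij hφ0 hexp
      (fun z₁ z₂ x => ξ₂ z₁ z₂ x - z₂ - a₂ x)
    · apply ContinuousOn.sub
      apply ContinuousOn.sub hcont₂
      · exact (continuous_fst.comp continuous_snd).continuousOn
      · exact hca₂.comp (continuous_snd.comp continuous_snd).continuousOn
          (fun q hq => hq.2.2)
    · intro x hx
      exact ((hholo₂ x hx).sub differentiable_snd).sub (differentiable_const _)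
    · intro z₁ z₂
      simp [hbd₂, ha₂0]
    · intro x hx
      simp [ha₂]
    · intro z₁ z₂ x hx
      have h1 := hL2 z₁ z₂ x hx
      have h2 := hfa₂ x hx
      linear_combination h1 - h2
  have hξ₂ : ∀ (z₁ z₂ : ℂ) (x : ℝ), 0 ≤ x → ξ₂ z₁ z₂ x = z₂ + a₂ x := by
    intro z₁ z₂ x hx
    have := hv₂ z₁ z₂ x hx
    linear_combination this
  -- ξ₁
  have hv₁ : ∀ (z₁ z₂ : ℂ) (x : ℝ), 0 ≤ x → ξ₁ z₁ z₂ x - z₁ - a₁ x = 0 := by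
    apply case4_vanish lam hlam φ hφcont hφbij hφ0 hexp
      (fun z₁ z₂ x => ξ₁ z₁ z₂ x - z₁ - a₁ x)
    · apply ContinuousOn.sub
      apply ContinuousOn.sub hcont₁
      · exact continuous_fst.continuousOn
      · exact hca₁.comp (continuous_snd.comp continuous_snd).continuousOn
          (fun q hq => hq.2.2)
    · intro x hx
      exact ((hholo₁ x hx).sub differentiable_fst).sub (differentiable_const _)
    · intro z₁ z₂
      simp [hbd₁, ha₁0]
    · intro x hx
      simp [ha₁]
    · intro z₁ z₂ x hx
      have h1 := hL1 z₁ z₂ x hx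
      have h2 := hfa₁ x hx
      have h3 := hξ₂ z₁ z₂ x hx
      linear_combination h1 - h2 + h3
  refine ⟨a₁, a₂, hca₁, hca₂, ha₁0, ha₂0, hfa₁, hfa₂, ?_⟩
  intro z₁ z₂ x hx
  constructor
  · linear_combination hv₁ z₁ z₂ x hx
  · exact hξ₂ z₁ z₂ x hx
end

section
/- Let μ ∈ ℂ with |μ| > 1 and let p ≥ 2 be an integer. Suppose ξ₁, ξ₂ : ℂ² × [0,∞) → ℂ are as in the context and satisfy ξ₁(μᵖz₁ + z₂ᵖ, μz₂, φ(x)) = μᵖ·ξ₁(z₁,z₂,x) + (ξ₂(z₁,z₂,x))ᵖ and ξ₂(μᵖz₁ + z₂ᵖ, μz₂, φ(x)) = μ·ξ₂(z₁,z₂,x) for all (z₁,z₂) ∈ ℂ² and x ≥ 0. Then there exist continuous functions a₀, a₁, …, a_{p−1}, b : [0,∞) → ℂ, all vanishing at 0, with b(φ(x)) = μ·b(x) and aⱼ(φ(x)) = μ^{p−j}·aⱼ(x) + cⱼ·b(x)^{p−j} for 0 ≤ j ≤ p−1, where cⱼ = C(p,j)·μ^{−j} (C(p,j) the binomial coefficient),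 such that ξ₁(z₁,z₂,x) = z₁ + Σ_{j=0}^{p−1} aⱼ(x)·z₂ʲ and ξ₂(z₁,z₂,x) = z₂ + b(x). (Classification in Case 5 of Section 3.2, underlying Theorem 3.13) -/
open Complex Metric Set Filter Polynomial Topology

namespace Case5Aux



/-- Schwarz-type lemma. -/
lemma schwarz_bound {f : ℂ → ℂ} (hf : Differentiable ℂ f) {c : ℂ} (h0 : f c = 0)
    {ρ M : ℝ} (hρ : 0 < ρ) (hb : ∀ ζ : ℂ, dist ζ c < ρ → norm (f ζ) ≤ M)
    {w : ℂ} (hw : dist w c < ρ) : norm (f w) ≤ M / ρ * dist w c := by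
  have hM : 0 ≤ M := by
    have := hb c (by simpa using hρ)
    exact le_trans (norm_nonneg _) this
  rcases eq_or_ne w c with rfl | hwc
  · have : (0:ℝ) ≤ M / ρ * dist w w := by positivity
    simpa [h0] using this
  have hd : 0 < dist w c := dist_pos.mpr hwc
  have key : ∀ η : ℝ, 0 < η → norm (f w) ≤ (M + η) / ρ * dist w c := by
    intro η hη
    have hmaps : MapsTo f (ball c ρ) (ball (f c) (M + η)) := by
      intro ζ hζ
      rw [mem_ball, h0, dist_zero_right]
      calc ‖f ζ‖ = norm (f ζ) := rfl
        _ ≤ M := hb ζ (mem_ball.mp hζ)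
        _ < M + η := by linarith
    have h2 := Complex.dist_le_div_mul_dist_of_mapsTo_ball hf.differentiableOn (hmaps.mono_right ball_subset_closedBall)
      (mem_ball.mpr hw)
    rwa [h0, dist_zero_right] at h2
  refine le_of_forall_pos_le_add fun ε hε => ?_
  have hη : 0 < ε * ρ / dist w c := by positivity
  have := key _ hη
  calc norm (f w) ≤ (M + ε * ρ / dist w c) / ρ * dist w c := this
    _ = M / ρ * dist w c + ε := by field_simp




/-- Uniform smallness of a continuous family vanishing at t = 0. -/
lemma small_param {E : Type*} [NormedAddCommGroup E] [NormedSpace ℝ E] [ProperSpace E]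
    {F : E → ℝ → ℂ} (hF : ContinuousOn (fun q : E × ℝ => F q.1 q.2) (univ ×ˢ Ici 0))
    (h0 : ∀ w, F w 0 = 0) (R : ℝ) {ε : ℝ} (hε : 0 < ε) :
    ∃ δ : ℝ, 0 < δ ∧ ∀ t : ℝ, 0 ≤ t → t ≤ δ → ∀ w : E, ‖w‖ ≤ R →
      norm (F w t) ≤ ε := by
  set C : Set (E × ℝ) := closedBall 0 R ×ˢ Icc (0:ℝ) 1 with hC
  have hCc : IsCompact C := (isCompact_closedBall _ _).prod isCompact_Icc
  have hsub : C ⊆ univ ×ˢ Ici 0 := fun q hq => ⟨trivial, hq.2.1⟩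
  have hu : UniformContinuousOn (fun q : E × ℝ => F q.1 q.2) C :=
    hCc.uniformContinuousOn_of_continuous (hF.mono hsub)
  rw [Metric.uniformContinuousOn_iff] at hu
  obtain ⟨δ, hδ, h⟩ := hu ε hε
  refine ⟨min (δ/2) 1, by positivity, fun t ht0 htδ w hw => ?_⟩
  have h1 : ((w, t) : E × ℝ) ∈ C :=
    ⟨mem_closedBall_zero_iff.mpr hw, ht0, le_trans htδ (min_le_right _ _)⟩
  have h2 : ((w, 0) : E × ℝ) ∈ C :=
    ⟨mem_closedBall_zero_iff.mpr hw, le_refl 0, zero_le_one⟩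
  have hd : dist ((w, t) : E × ℝ) (w, 0) < δ := by
    rw [Prod.dist_eq]
    simp only [dist_self, Real.dist_eq, sub_zero, _root_.abs_of_nonneg ht0]
    have ht2 : t ≤ δ / 2 := le_trans htδ (min_le_left _ _)
    have : t < δ := by linarith
    simpa using max_lt hδ this
  have h3 := h _ h1 _ h2 hd
  simp only [h0 w, dist_eq_norm, sub_zero] at h3
  exact le_of_lt h3

/-- Cauchy estimate for Taylor coefficients of an entire function on the unit disk. -/
lemma cauchy_bound {f : ℂ → ℂ} (hf : Differentiable ℂ f) {M : ℝ}
    (hM : ∀ z : ℂ, norm z ≤ 1 → norm (f z) ≤ M) (j : ℕ) :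
    norm (iteratedDeriv j f 0) ≤ j.factorial * M := by
  have hM0 : 0 ≤ M := le_trans (norm_nonneg _) (hM 0 (by simp))
  have h := hf.hasFPowerSeriesOnBall 0 (R := 1) one_pos
  have h1 : iteratedDeriv j f 0 = (j.factorial : ℂ) • ((cauchyPowerSeries f 0 1) j fun _ => (1:ℂ)) := by
    rw [iteratedDeriv_eq_iteratedFDeriv, ← h.factorial_smul (1:ℂ) j]
    push_cast [NNReal.coe_one]
    rw [← Nat.cast_smul_eq_nsmul ℂ]
  rw [h1]
  have h2 : norm ((j.factorial : ℂ) • ((cauchyPowerSeries f 0 1) j fun _ => (1:ℂ)))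
      = (j.factorial : ℝ) * ‖(cauchyPowerSeries f 0 1) j fun _ => (1:ℂ)‖ := by
    rw [smul_eq_mul, norm_mul]
    simp [Complex.norm_natCast]
  rw [h2]
  have h3 : ‖(cauchyPowerSeries f 0 1) j fun _ => (1:ℂ)‖ ≤ ‖cauchyPowerSeries f 0 1 j‖ := by
    have := (cauchyPowerSeries f 0 1 j).le_opNorm fun _ => (1:ℂ)
    simpa using this
  have h4 := norm_cauchyPowerSeries_le f 0 1 j
  have h5 : (∫ θ : ℝ in (0)..2 * Real.pi, ‖f (circleMap 0 1 θ)‖) ≤ 2 * Real.pi * M := by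
    have hint : IntervalIntegrable (fun θ : ℝ => ‖f (circleMap 0 1 θ)‖)
        MeasureTheory.volume 0 (2 * Real.pi) :=
      ((hf.continuous.comp (continuous_circleMap 0 1)).norm).intervalIntegrable _ _
    have hconst : IntervalIntegrable (fun _ : ℝ => M) MeasureTheory.volume 0 (2 * Real.pi) :=
      intervalIntegrable_const
    have := intervalIntegral.integral_mono_on (by positivity) hint hconst
      (fun θ _ => by
        have : norm (circleMap 0 1 θ) = 1 := by simp [norm_circleMap_zero]
        exact hM _ this.le)
    simpa [mul_comm] using this
  have h6 : ‖cauchyPowerSeries f 0 1 j‖ ≤ M := by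
    refine le_trans h4 ?_
    have h7 : (|(1:ℝ)|⁻¹) ^ j = 1 := by norm_num
    rw [h7, mul_one]
    calc (2 * Real.pi)⁻¹ * ∫ θ : ℝ in (0)..2 * Real.pi, ‖f (circleMap 0 1 θ)‖
        ≤ (2 * Real.pi)⁻¹ * (2 * Real.pi * M) := by
          apply mul_le_mul_of_nonneg_left h5 (by positivity)
      _ = M := by field_simp
  exact mul_le_mul_of_nonneg_left (le_trans h3 h6) (by positivity)




/-- Backward orbit of `x` under a boundary-expanding homeomorphism `φ` of `[0,∞)`. -/
lemma exists_backward_orbit (φ : ℝ → ℝ)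
    (hφcont : ContinuousOn φ (Set.Ici 0))
    (hφbij : Set.BijOn φ (Set.Ici 0) (Set.Ici 0))
    (hexp : ∀ x : ℝ, 0 < x → x < φ x)
    {x : ℝ} (hx : 0 ≤ x) :
    ∃ t : ℕ → ℝ, t 0 = x ∧ (∀ n, 0 ≤ t n) ∧ (∀ n, t n ≤ x) ∧
      (∀ n, φ (t (n + 1)) = t n) ∧ Tendsto t atTop (nhds 0) := by
  set ψ : ℝ → ℝ := Function.invFunOn φ (Set.Ici 0) with hψ
  have hmem : ∀ y : ℝ, 0 ≤ y → ψ y ∈ Set.Ici (0:ℝ) ∧ φ (ψ y) = y := by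
    intro y hy
    obtain ⟨a, ha, hfa⟩ := hφbij.surjOn hy
    exact ⟨Function.invFunOn_mem ⟨a, ha, hfa⟩, Function.invFunOn_eq ⟨a, ha, hfa⟩⟩
  have hψle : ∀ y : ℝ, 0 ≤ y → ψ y ≤ y := by
    intro y hy
    by_contra hlt
    push_neg at hlt
    have h1 : 0 < ψ y := lt_of_le_of_lt hy hlt
    have h2 := hexp _ h1
    rw [(hmem y hy).2] at h2
    exact absurd (lt_trans hlt h2) (lt_irrefl _)
  have hnn : ∀ n, 0 ≤ ψ^[n] x := by
    intro n
    induction n with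
    | zero => exact hx
    | succ n ih => rw [Function.iterate_succ_apply']; exact (hmem _ ih).1
  have hdec : ∀ n, ψ^[n+1] x ≤ ψ^[n] x := by
    intro n
    rw [Function.iterate_succ_apply']
    exact hψle _ (hnn n)
  have hanti : Antitone (fun n => ψ^[n] x) :=
    antitone_nat_of_succ_le hdec
  have hle : ∀ n, ψ^[n] x ≤ x := fun n => by
    simpa using hanti (Nat.zero_le n)
  have hbdd : BddBelow (Set.range fun n => ψ^[n] x) :=
    ⟨0, fun y ⟨n, hn⟩ => hn ▸ hnn n⟩
  have hlim : Tendsto (fun n => ψ^[n] x) atTop (nhds (⨅ n, ψ^[n] x)) :=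
    tendsto_atTop_ciInf hanti hbdd
  set L := ⨅ n, ψ^[n] x with hL
  have hL0 : 0 ≤ L := le_ciInf fun n => hnn n
  have hstep : ∀ n, φ (ψ^[n+1] x) = ψ^[n] x := by
    intro n
    rw [Function.iterate_succ_apply']
    exact (hmem _ (hnn n)).2
  have hφL : φ L = L := by
    have h1 : Tendsto (fun n => ψ^[n+1] x) atTop (nhds L) :=
      hlim.comp (tendsto_add_atTop_nat 1)
    have h2 : Tendsto (fun n => ψ^[n+1] x) atTop (nhdsWithin L (Set.Ici 0)) := by
      rw [tendsto_nhdsWithin_iff]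
      exact ⟨h1, Eventually.of_forall fun n => hnn (n+1)⟩
    have h3 : Tendsto (fun n => φ (ψ^[n+1] x)) atTop (nhds (φ L)) :=
      (hφcont L hL0).tendsto.comp h2
    have h4 : Tendsto (fun n => φ (ψ^[n+1] x)) atTop (nhds L) := by
      simp only [hstep]
      exact hlim
    exact tendsto_nhds_unique h3 h4
  have hLzero : L = 0 := by
    rcases lt_or_eq_of_le hL0 with h | h
    · exact absurd (hφL ▸ hexp L h) (lt_irrefl _)
    · exact h.symm
  exact ⟨fun n => ψ^[n] x, rfl, hnn, hle, hstep, hLzero ▸ hlim⟩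




lemma iteratedDeriv_add'' {n : ℕ} {f g : ℂ → ℂ} (hf : Differentiable ℂ f)
    (hg : Differentiable ℂ g) (x : ℂ) :
    iteratedDeriv n (fun z => f z + g z) x = iteratedDeriv n f x + iteratedDeriv n g x := by
  simp only [← iteratedDerivWithin_univ]
  exact iteratedDerivWithin_add (Set.mem_univ x) uniqueDiffOn_univ
    hf.contDiff.contDiffWithinAt hg.contDiff.contDiffWithinAt

lemma iteratedDeriv_cmul {n : ℕ} {f : ℂ → ℂ} (hf : Differentiable ℂ f) (c : ℂ) (x : ℂ) :
    iteratedDeriv n (fun z => c * f z) x = c * iteratedDeriv n f x := by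
  simp only [← iteratedDerivWithin_univ]
  exact iteratedDerivWithin_const_mul (Set.mem_univ x) uniqueDiffOn_univ c
    hf.contDiff.contDiffWithinAt

lemma iteratedDeriv_polyeval (n : ℕ) (q : Polynomial ℂ) (x : ℂ) :
    iteratedDeriv n (fun z => q.eval z) x = ((Polynomial.derivative)^[n] q).eval x := by
  induction n generalizing q with
  | zero => simp
  | succ n ih =>
    rw [iteratedDeriv_succ']
    have hder : deriv (fun z => q.eval z) = fun z => (Polynomial.derivative q).eval z :=
      funext fun z => Polynomial.deriv q
    rw [hder, ih, Function.iterate_succ_apply]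

lemma natDegree_shiftpow_sub_lt {p : ℕ} (hp : 1 ≤ p) (c : ℂ) :
    ((Polynomial.X + Polynomial.C c) ^ p - Polynomial.X ^ p : Polynomial ℂ).natDegree < p := by
  rcases eq_or_ne ((Polynomial.X + Polynomial.C c) ^ p - Polynomial.X ^ p : Polynomial ℂ) 0
    with h | h
  · rw [h]; simp only [Polynomial.natDegree_zero]; omega
  · have hmonic : ((Polynomial.X + Polynomial.C c) ^ p : Polynomial ℂ).Monic :=
      (Polynomial.monic_X_add_C c).pow p
    have hdeg1 : ((Polynomial.X + Polynomial.C c) ^ p : Polynomial ℂ).degree = p := by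
      rw [Polynomial.degree_pow, Polynomial.degree_X_add_C]
      simp
    have hdeg2 : ((Polynomial.X : Polynomial ℂ) ^ p).degree = p := Polynomial.degree_X_pow p
    have hlt := Polynomial.degree_sub_lt (hdeg1.trans hdeg2.symm) hmonic.ne_zero
      (by rw [hmonic.leadingCoeff, (Polynomial.monic_X_pow p).leadingCoeff])
    rw [hdeg1] at hlt
    exact (Polynomial.natDegree_lt_iff_degree_lt h).mpr hlt

/-- p-th iterate of derivative of `(X+C c)^p − X^p` evaluated at `0`. -/
lemma iterate_derivative_shiftpow_sub_eval_zero {p j : ℕ} (hj : j < p) (c : ℂ) :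
    ((Polynomial.derivative)^[j]
      ((Polynomial.X + Polynomial.C c) ^ p - Polynomial.X ^ p : Polynomial ℂ)).eval 0
      = (j.factorial : ℂ) * (p.choose j : ℂ) * c ^ (p - j) := by
  rw [← Polynomial.coeff_zero_eq_eval_zero, Polynomial.coeff_iterate_derivative]
  rw [zero_add]
  rw [Polynomial.coeff_sub, Polynomial.coeff_X_add_C_pow, Polynomial.coeff_X_pow,
    if_neg hj.ne, sub_zero, Nat.descFactorial_self]
  rw [nsmul_eq_mul]
  push_cast
  ring

/-- Solving for coefficients of a polynomial from its values at `0, 1, …, q-1`. -/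
lemma vandermonde_solve {q : ℕ} (c : Fin q → ℂ) (f : Fin q → ℂ)
    (h : ∀ k : Fin q, f k = ∑ j : Fin q, c j * ((k : ℕ) : ℂ) ^ (j : ℕ)) (j : Fin q) :
    c j = ∑ k : Fin q,
      ((Matrix.vandermonde (fun i : Fin q => ((i : ℕ) : ℂ)))⁻¹ j k) * f k := by
  set V := Matrix.vandermonde (fun i : Fin q => ((i : ℕ) : ℂ)) with hV
  have hdet : IsUnit V.det := by
    rw [hV, Matrix.det_vandermonde]
    rw [isUnit_iff_ne_zero]
    apply Finset.prod_ne_zero_iff.mpr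
    intro i _
    apply Finset.prod_ne_zero_iff.mpr
    intro k hk
    rw [Finset.mem_Ioi] at hk
    have : (i : ℕ) < (k : ℕ) := hk
    have hne : ((i : ℕ) : ℂ) ≠ ((k : ℕ) : ℂ) := by
      exact_mod_cast Nat.ne_of_lt this
    exact sub_ne_zero.mpr (Ne.symm hne)
  have hVc : V.mulVec c = f := by
    funext k
    rw [Matrix.mulVec]
    simp only [dotProduct, hV, Matrix.vandermonde]
    rw [h k]
    refine Finset.sum_congr rfl fun i _ => ?_
    simp only [Matrix.of_apply]
    ring
  have h2 : V⁻¹.mulVec (V.mulVec c) = V⁻¹.mulVec f := by rw [hVc]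
  rw [Matrix.mulVec_mulVec, Matrix.nonsing_inv_mul V hdet, Matrix.one_mulVec] at h2
  have := congrFun h2 j
  rw [this]
  rw [Matrix.mulVec]
  simp [dotProduct]




/-- Backward orbit of the first coordinate under `G⁻¹` for
`G(w₁,w₂) = (μᵖw₁ + w₂ᵖ, μw₂)`, along second coordinate `z₂/μⁿ`. -/
noncomputable def useq (μ z₁ z₂ : ℂ) (p : ℕ) : ℕ → ℂ :=
  fun n => Nat.rec z₁ (fun k u => (u - (z₂ / μ ^ k / μ) ^ p) / μ ^ p) n

lemma useq_zero (μ z₁ z₂ : ℂ) (p : ℕ) : useq μ z₁ z₂ p 0 = z₁ := rfl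

lemma useq_succ (μ z₁ z₂ : ℂ) (p : ℕ) (n : ℕ) :
    useq μ z₁ z₂ p (n + 1) = (useq μ z₁ z₂ p n - (z₂ / μ ^ n / μ) ^ p) / μ ^ p := rfl

lemma useq_step {μ : ℂ} (hμ : μ ≠ 0) (z₁ z₂ : ℂ) (p : ℕ) (n : ℕ) :
    μ ^ p * useq μ z₁ z₂ p (n + 1) + (z₂ / μ ^ (n + 1)) ^ p = useq μ z₁ z₂ p n := by
  rw [useq_succ]
  have h1 : z₂ / μ ^ n / μ = z₂ / μ ^ (n + 1) := by
    rw [div_div, pow_succ]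
  rw [h1, mul_div_cancel₀ _ (pow_ne_zero p hμ)]
  ring

lemma useq_sub {μ : ℂ} (hμ : μ ≠ 0) (a z₁ z₂ : ℂ) (p : ℕ) (n : ℕ) :
    useq μ a z₂ p n - useq μ z₁ z₂ p n = (a - z₁) / (μ ^ p) ^ n := by
  induction n with
  | zero => simp [useq_zero]
  | succ n ih =>
    rw [useq_succ, useq_succ, div_sub_div_same]
    have h2 : useq μ a z₂ p n - (z₂ / μ ^ n / μ) ^ p - (useq μ z₁ z₂ p n - (z₂ / μ ^ n / μ) ^ p)
        = useq μ a z₂ p n - useq μ z₁ z₂ p n := by ring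
    rw [h2, ih, pow_succ]
    field_simp

lemma useq_bound {μ : ℂ} (hm : 1 < norm μ) {p : ℕ} (hp : 2 ≤ p)
    (z₁ z₂ : ℂ) (n : ℕ) :
    norm (useq μ z₁ z₂ p n)
      ≤ max (norm z₁) (norm z₂ ^ p / (norm μ - 1)) / norm μ ^ n := by
  set m := norm μ with hmdef
  set A := norm z₁ with hA
  set B := norm z₂ with hB
  set M := max A (B ^ p / (m - 1)) with hM
  have hm0 : 0 < m := lt_trans one_pos hm
  have hm1 : (1:ℝ) ≤ m := hm.le
  have hMA : A ≤ M := le_max_left _ _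
  have hMB : B ^ p / (m - 1) ≤ M := le_max_right _ _
  have hM0 : 0 ≤ M := le_trans (norm_nonneg _) hMA
  have hB0 : 0 ≤ B := norm_nonneg _
  have hBM : B ^ p ≤ M * (m - 1) := by
    rw [div_le_iff₀ (by linarith)] at hMB
    linarith [hMB]
  induction n with
  | zero => simpa [useq_zero] using hMA
  | succ n ih =>
    have h1 : z₂ / μ ^ n / μ = z₂ / μ ^ (n + 1) := by rw [div_div, pow_succ]
    rw [useq_succ, h1, norm_div, norm_pow]
    rw [div_le_iff₀ (by positivity)]
    have h2 : norm (useq μ z₁ z₂ p n - (z₂ / μ ^ (n+1)) ^ p)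
        ≤ M / m ^ n + (B / m ^ (n+1)) ^ p := by
      refine le_trans (norm_sub_le _ _) ?_
      refine add_le_add ih (le_of_eq ?_)
      rw [norm_pow, norm_div, norm_pow]
    refine le_trans h2 ?_
    have hpow1 : m ^ n ≤ (m ^ (n+1)) ^ p := by
      rw [← pow_mul]
      exact pow_le_pow_right₀ hm1 (by nlinarith)
    have h3 : (B / m ^ (n+1)) ^ p ≤ M * (m - 1) / m ^ n := by
      rw [div_pow]
      exact div_le_div₀ (by nlinarith) hBM (by positivity) hpow1
    have h4 : m ^ 2 ≤ m ^ p := pow_le_pow_right₀ hm1 hp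
    have h5 : M / m ^ n + M * (m - 1) / m ^ n ≤ M / m ^ (n+1) * m ^ p := by
      have hmn : (0:ℝ) < m ^ n := by positivity
      rw [← add_div, div_mul_eq_mul_div, div_le_div_iff₀ hmn (by positivity)]
      have hexp2 : m ^ (n+1) = m ^ n * m := pow_succ m n
      calc (M + M * (m - 1)) * m ^ (n+1) = M * m ^ 2 * m ^ n := by rw [hexp2]; ring
        _ ≤ M * m ^ p * m ^ n := by
          have := mul_le_mul_of_nonneg_left h4 hM0
          nlinarith
    linarith


end Case5Aux

set_option maxHeartbeats 1600000 in
open Case5Aux in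
/-- Case 5 of Section 3.2 (underlying Theorem 3.13): for
`G(z₁,z₂) = (μᵖz₁ + z₂ᵖ, μz₂)` with `|μ| > 1`, `p ≥ 2`, any leafwise-holomorphic
lift `(ξ₁, ξ₂)` restricting to the identity on the boundary and equivariant for
`T` has the form `ξ₁ = z₁ + Σ_{j<p} aⱼ(x)·z₂ʲ`, `ξ₂ = z₂ + b(x)` where
`b ∈ 𝒵_{φ,μ}` and `aⱼ(φ(x)) = μ^{p−j}·aⱼ(x) + cⱼ·b(x)^{p−j}` with
`cⱼ = C(p,j)·μ^{−j}`. -/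
theorem case_5_classification (μ : ℂ) (hμ : 1 < ‖μ‖)
    (p : ℕ) (hp : 2 ≤ p)
    (φ : ℝ → ℝ)
    (hφcont : ContinuousOn φ (Set.Ici 0))
    (hφmono : StrictMonoOn φ (Set.Ici 0))
    (hφbij : Set.BijOn φ (Set.Ici 0) (Set.Ici 0))
    (hφ0 : φ 0 = 0)
    (hexp : ∀ x : ℝ, 0 < x → x < φ x)
    (ξ₁ ξ₂ : ℂ → ℂ → ℝ → ℂ)
    (hcont₁ : ContinuousOn (fun q : ℂ × ℂ × ℝ => ξ₁ q.1 q.2.1 q.2.2)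
      (Set.univ ×ˢ Set.univ ×ˢ Set.Ici 0))
    (hcont₂ : ContinuousOn (fun q : ℂ × ℂ × ℝ => ξ₂ q.1 q.2.1 q.2.2)
      (Set.univ ×ˢ Set.univ ×ˢ Set.Ici 0))
    (hholo₁ : ∀ x : ℝ, 0 ≤ x → Differentiable ℂ (fun z : ℂ × ℂ => ξ₁ z.1 z.2 x))
    (hholo₂ : ∀ x : ℝ, 0 ≤ x → Differentiable ℂ (fun z : ℂ × ℂ => ξ₂ z.1 z.2 x))
    (hbd₁ : ∀ z₁ z₂ : ℂ, ξ₁ z₁ z₂ 0 = z₁)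
    (hbd₂ : ∀ z₁ z₂ : ℂ, ξ₂ z₁ z₂ 0 = z₂)
    (hL1 : ∀ z₁ z₂ : ℂ, ∀ x : ℝ, 0 ≤ x →
      ξ₁ (μ ^ p * z₁ + z₂ ^ p) (μ * z₂) (φ x)
        = μ ^ p * ξ₁ z₁ z₂ x + (ξ₂ z₁ z₂ x) ^ p)
    (hL2 : ∀ z₁ z₂ : ℂ, ∀ x : ℝ, 0 ≤ x →
      ξ₂ (μ ^ p * z₁ + z₂ ^ p) (μ * z₂) (φ x) = μ * ξ₂ z₁ z₂ x) :
    ∃ a : Fin p → ℝ → ℂ, ∃ b : ℝ → ℂ,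
      (∀ j : Fin p, ContinuousOn (a j) (Set.Ici 0)) ∧
      ContinuousOn b (Set.Ici 0) ∧
      (∀ j : Fin p, a j 0 = 0) ∧ b 0 = 0 ∧
      (∀ x : ℝ, 0 ≤ x → b (φ x) = μ * b x) ∧
      (∀ j : Fin p, ∀ x : ℝ, 0 ≤ x →
        a j (φ x) = μ ^ (p - (j : ℕ)) * a j x
          + ((p.choose (j : ℕ) : ℂ) / μ ^ (j : ℕ)) * (b x) ^ (p - (j : ℕ))) ∧
      ∀ z₁ z₂ : ℂ, ∀ x : ℝ, 0 ≤ x →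
        ξ₁ z₁ z₂ x = z₁ + ∑ j : Fin p, a j x * z₂ ^ (j : ℕ) ∧
        ξ₂ z₁ z₂ x = z₂ + b x := by
  have hμ0 : μ ≠ 0 := by
    intro h
    rw [h, norm_zero] at hμ
    linarith
  have hm0 : (0:ℝ) < norm μ := lt_trans one_pos hμ
  have hm1 : (1:ℝ) ≤ norm μ := hμ.le
  have hp0 : p ≠ 0 := by omega
  have hφmaps : ∀ x : ℝ, 0 ≤ x → 0 ≤ φ x := fun x hx => hφbij.mapsTo hx
  -- the boundary translation part
  set b : ℝ → ℂ := fun x => ξ₂ 0 0 x with hbdef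
  have hb0 : b 0 = 0 := by simpa using hbd₂ 0 0
  have hbφ : ∀ x : ℝ, 0 ≤ x → b (φ x) = μ * b x := by
    intro x hx
    have h := hL2 0 0 x hx
    simpa [zero_pow hp0] using h
  have hbcont : ContinuousOn b (Set.Ici 0) := by
    have h1 : ContinuousOn (fun x : ℝ => ((0:ℂ), (0:ℂ), x)) (Set.Ici 0) :=
      (continuous_const.prodMk (continuous_const.prodMk continuous_id)).continuousOn
    exact hcont₂.comp h1 (fun x hx => ⟨trivial, trivial, hx⟩)
  ---------------------------------------------------------------------------
  -- Stage 0 : ξ₂ z₁ z₂ x = z₂ + b x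
  ---------------------------------------------------------------------------
  have hξ2 : ∀ x : ℝ, 0 ≤ x → ∀ z₁ z₂ : ℂ, ξ₂ z₁ z₂ x = z₂ + b x := by
    intro x hx z₁ z₂
    set W : ℂ → ℂ → ℝ → ℂ := fun w₁ w₂ t => ξ₂ w₁ w₂ t - w₂ - b t with hWdef
    have hW0 : ∀ w₁ w₂ : ℂ, W w₁ w₂ 0 = 0 := fun w₁ w₂ => by
      simp [hWdef, hbd₂ w₁ w₂, hb0]
    have hWrel : ∀ t : ℝ, 0 ≤ t → ∀ w₁ w₂ : ℂ,
        W (μ ^ p * w₁ + w₂ ^ p) (μ * w₂) (φ t) = μ * W w₁ w₂ t := by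
      intro t ht w₁ w₂
      simp only [hWdef]
      rw [hL2 w₁ w₂ t ht, hbφ t ht]
      ring
    suffices hW : W z₁ z₂ x = 0 by
      have h : ξ₂ z₁ z₂ x - z₂ - b x = 0 := hW
      linear_combination h
    obtain ⟨t, ht0, htnn, htle, htstep, htlim⟩ :=
      exists_backward_orbit φ hφcont hφbij hexp hx
    set u : ℕ → ℂ := useq μ z₁ z₂ p with hu
    set v : ℕ → ℂ := fun n => z₂ / μ ^ n with hv
    have hchain : ∀ n, W z₁ z₂ x = μ ^ n * W (u n) (v n) (t n) := by
      intro n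
      induction n with
      | zero => simp [hu, hv, useq_zero, ht0]
      | succ n ih =>
        have hs : μ ^ p * u (n+1) + (v (n+1)) ^ p = u n := useq_step hμ0 z₁ z₂ p n
        have hv1 : μ * v (n+1) = v n := by
          simp only [hv]
          field_simp [pow_succ]
          ring
        have hrel := hWrel (t (n+1)) (htnn (n+1)) (u (n+1)) (v (n+1))
        rw [htstep n, hs, hv1] at hrel
        rw [ih, hrel, pow_succ]
        ring
    have hfinal : ∀ ε : ℝ, 0 < ε → norm (W z₁ z₂ x) ≤ ε := by
      intro ε hε
      set m := norm μ with hmdef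
      set M := max (norm z₁) (norm z₂ ^ p / (m - 1)) with hMdef
      set K := max M (norm z₂) with hKdef
      have hM0 : 0 ≤ M := le_trans (norm_nonneg z₁) (le_max_left _ _)
      have hK0 : 0 ≤ K := le_trans hM0 (le_max_left _ _)
      set ρ := K + 1 with hρdef
      have hρpos : (0:ℝ) < ρ := by linarith
      have hFcont : ContinuousOn (fun q : (ℂ × ℂ) × ℝ => W q.1.1 q.1.2 q.2)
          (univ ×ˢ Ici 0) := by
        simp only [hWdef]
        have h1 : ContinuousOn (fun q : (ℂ × ℂ) × ℝ => ξ₂ q.1.1 q.1.2 q.2)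
            (univ ×ˢ Ici 0) := by
          have hmap : ∀ q : (ℂ × ℂ) × ℝ, q ∈ (univ ×ˢ Ici 0 : Set ((ℂ × ℂ) × ℝ)) →
              (q.1.1, q.1.2, q.2) ∈ (univ ×ˢ univ ×ˢ Ici 0 : Set (ℂ × ℂ × ℝ)) :=
            fun q hq => ⟨trivial, trivial, hq.2⟩
          exact hcont₂.comp
            ((continuous_fst.fst.prodMk (continuous_fst.snd.prodMk continuous_snd)).continuousOn)
            hmap
        have h2 : ContinuousOn (fun q : (ℂ × ℂ) × ℝ => b q.2) (univ ×ˢ Ici 0) :=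
          hbcont.comp continuous_snd.continuousOn (fun q hq => hq.2)
        exact (h1.sub (continuous_fst.snd.continuousOn)).sub h2
      obtain ⟨δ, hδpos, hsmall⟩ :=
        small_param (F := fun (w : ℂ × ℂ) t => W w.1 w.2 t) hFcont
          (fun w => hW0 w.1 w.2) ρ hε
      obtain ⟨n, hn⟩ := (htlim.eventually_lt_const hδpos).exists
      have htn : t n ≤ δ := hn.le
      rw [hchain n, norm_mul, norm_pow]
      -- bounds on the backward orbit
      have hub : norm (u n) ≤ M / m ^ n := useq_bound hμ hp z₁ z₂ n
      have hvb : norm (v n) = norm z₂ / m ^ n := by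
        simp only [hv]
        rw [norm_div, norm_pow]
      set r := max (norm (u n)) (norm (v n)) with hrdef
      have hr_le : r ≤ K / m ^ n := by
        apply max_le
        · exact le_trans hub (by gcongr; exact le_max_left _ _)
        · rw [hvb]; gcongr; exact le_max_right _ _
      have hmn1 : (1:ℝ) ≤ m ^ n := one_le_pow₀ hm1
      have hrK : r ≤ K := le_trans hr_le (by
        calc K / m ^ n ≤ K / 1 := by gcongr
          _ = K := div_one K)
      rcases eq_or_lt_of_le (le_trans (norm_nonneg (u n)) (le_max_left _ _) :
          (0:ℝ) ≤ r) with hr0 | hr0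
      · -- degenerate case : u n = v n = 0
        have hu0 : u n = 0 := by
          have : norm (u n) = 0 := le_antisymm
            (le_trans (le_max_left _ (norm (v n))) hr0.symm.le) (norm_nonneg _)
          exact norm_eq_zero.mp this
        have hv0 : v n = 0 := by
          have : norm (v n) = 0 := le_antisymm
            (le_trans (le_max_right (norm (u n)) _) hr0.symm.le) (norm_nonneg _)
          exact norm_eq_zero.mp this
        rw [hu0, hv0]
        have : W 0 0 (t n) = 0 := by simp [hWdef, hbdef]
        rw [this, norm_zero, mul_zero]
        exact hε.le
      · -- Schwarz lemma along the complex line through (u n, v n)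
        set f : ℂ → ℂ := fun lam => W (lam * u n) (lam * v n) (t n) with hfdef
        have hf : Differentiable ℂ f := by
          have h2 := hholo₂ (t n) (htnn n)
          have hpair : Differentiable ℂ (fun lam : ℂ => (lam * u n, lam * v n)) :=
            (differentiable_id.mul_const _).prodMk (differentiable_id.mul_const _)
          exact ((h2.comp hpair).sub (differentiable_id.mul_const _)).sub (differentiable_const _)
        have hf0 : f 0 = 0 := by
          simp [hfdef, hWdef, hbdef]
        have hbnd : ∀ ζ : ℂ, dist ζ 0 < ρ / r → norm (f ζ) ≤ ε := by
          intro ζ hζ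
          rw [Complex.dist_eq, sub_zero] at hζ
          refine hsmall (t n) (htnn n) htn (ζ * u n, ζ * v n) ?_
          rw [Prod.norm_def]
          apply max_le
          · rw [norm_mul]
            calc norm ζ * norm (u n) ≤ (ρ / r) * r := by
                  apply mul_le_mul hζ.le (le_max_left _ _) (norm_nonneg _)
                  positivity
              _ = ρ := div_mul_cancel₀ ρ hr0.ne'
          · rw [norm_mul]
            calc norm ζ * norm (v n) ≤ (ρ / r) * r := by
                  apply mul_le_mul hζ.le (le_max_right _ _) (norm_nonneg _)
                  positivity
              _ = ρ := div_mul_cancel₀ ρ hr0.ne'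
        have h1r : dist (1:ℂ) 0 < ρ / r := by
          rw [Complex.dist_eq, sub_zero, norm_one]
          rw [lt_div_iff₀ hr0, one_mul]
          exact lt_of_le_of_lt hrK (by linarith)
        have hS := schwarz_bound hf hf0 (div_pos hρpos hr0) hbnd h1r
        have hf1 : f 1 = W (u n) (v n) (t n) := by simp [hfdef]
        rw [hf1] at hS
        rw [Complex.dist_eq, sub_zero, norm_one, mul_one] at hS
        -- |W z₁ z₂ x| = m^n |W(u n, v n, t n)| ≤ m^n ε r / ρ ≤ ε K/ρ ≤ ε
        have hrm : m ^ n * r ≤ K := by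
          rw [← le_div_iff₀' (by positivity)]
          exact hr_le
        have hS2 : norm (W (u n) (v n) (t n)) ≤ ε * r / ρ := by
          rwa [div_div_eq_mul_div] at hS
        have hrm : m ^ n * r ≤ K := by
          rw [← le_div_iff₀' (by positivity : (0:ℝ) < m ^ n)]
          exact hr_le
        calc m ^ n * norm (W (u n) (v n) (t n))
            ≤ m ^ n * (ε * r / ρ) := by gcongr
          _ = ε * (m ^ n * r) / ρ := by ring
          _ ≤ ε * K / ρ := by gcongr
          _ ≤ ε := by
              rw [div_le_iff₀ hρpos]
              nlinarith
    have habs : norm (W z₁ z₂ x) = 0 := by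
      by_contra h
      have hpos : 0 < norm (W z₁ z₂ x) :=
        lt_of_le_of_ne (norm_nonneg _) (Ne.symm h)
      have := hfinal _ (half_pos hpos)
      linarith
    exact norm_eq_zero.mp habs
  ---------------------------------------------------------------------------
  -- Stage 1 : ξ₁ w₁ w₂ x = ξ₁ aa w₂ x + (w₁ - aa)
  ---------------------------------------------------------------------------
  have hξ1 : ∀ x : ℝ, 0 ≤ x → ∀ w₂ aa w₁ : ℂ, ξ₁ w₁ w₂ x = ξ₁ aa w₂ x + (w₁ - aa) := by
    intro x hx w₂ aa w₁
    set V : ℂ → ℂ → ℂ → ℝ → ℂ :=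
      fun a0 u0 v0 t => ξ₁ u0 v0 t - ξ₁ a0 v0 t - (u0 - a0) with hVdef
    have hV0 : ∀ a0 u0 v0 : ℂ, V a0 u0 v0 0 = 0 := fun a0 u0 v0 => by
      simp [hVdef, hbd₁]
    have hVrel : ∀ t : ℝ, 0 ≤ t → ∀ a0 u0 v0 : ℂ,
        V (μ ^ p * a0 + v0 ^ p) (μ ^ p * u0 + v0 ^ p) (μ * v0) (φ t)
          = μ ^ p * V a0 u0 v0 t := by
      intro t ht a0 u0 v0
      simp only [hVdef]
      rw [hL1 u0 v0 t ht, hL1 a0 v0 t ht, hξ2 t ht u0 v0, hξ2 t ht a0 v0]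
      ring
    suffices hV : V aa w₁ w₂ x = 0 by
      have h : ξ₁ w₁ w₂ x - ξ₁ aa w₂ x - (w₁ - aa) = 0 := hV
      linear_combination h
    obtain ⟨t, ht0, htnn, htle, htstep, htlim⟩ :=
      exists_backward_orbit φ hφcont hφbij hexp hx
    set u : ℕ → ℂ := useq μ w₁ w₂ p with hu
    set u' : ℕ → ℂ := useq μ aa w₂ p with hu'
    set v : ℕ → ℂ := fun n => w₂ / μ ^ n with hv
    have hchain : ∀ n, V aa w₁ w₂ x = (μ ^ p) ^ n * V (u' n) (u n) (v n) (t n) := by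
      intro n
      induction n with
      | zero => simp [hu, hu', hv, useq_zero, ht0]
      | succ n ih =>
        have hs : μ ^ p * u (n+1) + (v (n+1)) ^ p = u n := useq_step hμ0 w₁ w₂ p n
        have hs' : μ ^ p * u' (n+1) + (v (n+1)) ^ p = u' n := useq_step hμ0 aa w₂ p n
        have hv1 : μ * v (n+1) = v n := by
          simp only [hv]
          field_simp [pow_succ]
          ring
        have hrel := hVrel (t (n+1)) (htnn (n+1)) (u' (n+1)) (u (n+1)) (v (n+1))
        rw [htstep n, hs, hs', hv1] at hrel
        rw [ih, hrel, pow_succ]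
        ring
    have hfinal : ∀ ε : ℝ, 0 < ε →
        norm (V aa w₁ w₂ x) ≤ ε * (norm (w₁ - aa) + 1) := by
      intro ε hε
      set m := norm μ with hmdef
      set Ma := max (norm aa) (norm w₂ ^ p / (m - 1)) with hMadef
      have hMa0 : 0 ≤ Ma := le_trans (norm_nonneg aa) (le_max_left _ _)
      set R := Ma + norm w₂ + 1 with hRdef
      have hFcont : ContinuousOn (fun q : (ℂ × ℂ × ℂ) × ℝ => V q.1.1 q.1.2.1 q.1.2.2 q.2)
          (univ ×ˢ Ici 0) := by
        simp only [hVdef]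
        have hc1 : ContinuousOn (fun q : (ℂ × ℂ × ℂ) × ℝ => ξ₁ q.1.2.1 q.1.2.2 q.2)
            (univ ×ˢ Ici 0) :=
          hcont₁.comp ((continuous_fst.snd.fst.prodMk
            (continuous_fst.snd.snd.prodMk continuous_snd)).continuousOn)
            (fun q hq => ⟨trivial, trivial, hq.2⟩)
        have hc2 : ContinuousOn (fun q : (ℂ × ℂ × ℂ) × ℝ => ξ₁ q.1.1 q.1.2.2 q.2)
            (univ ×ˢ Ici 0) :=
          hcont₁.comp ((continuous_fst.fst.prodMk
            (continuous_fst.snd.snd.prodMk continuous_snd)).continuousOn)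
            (fun q hq => ⟨trivial, trivial, hq.2⟩)
        exact (hc1.sub hc2).sub ((continuous_fst.snd.fst.sub continuous_fst.fst).continuousOn)
      obtain ⟨δ, hδpos, hsmall⟩ :=
        small_param (F := fun (w : ℂ × ℂ × ℂ) t => V w.1 w.2.1 w.2.2 t) hFcont
          (fun w => hV0 w.1 w.2.1 w.2.2) R hε
      have hmp1 : (1:ℝ) < m ^ p := one_lt_pow₀ hμ hp0
      have hdist_lim : Tendsto (fun n : ℕ => norm (w₁ - aa) / (m ^ p) ^ n)
          atTop (𝓝 0) := by
        simp only [div_eq_mul_inv]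
        have h1 : Tendsto (fun n : ℕ => ((m ^ p) ^ n)⁻¹) atTop (𝓝 0) :=
          (tendsto_pow_atTop_atTop_of_one_lt hmp1).inv_tendsto_atTop
        simpa using h1.const_mul (norm (w₁ - aa))
      obtain ⟨n, hn1, hn2⟩ := ((htlim.eventually_lt_const hδpos).and
        (hdist_lim.eventually_lt_const one_pos)).exists
      rw [hchain n, norm_mul, norm_pow, norm_pow]
      have hub' : norm (u' n) ≤ Ma :=
        le_trans (useq_bound hμ hp aa w₂ n) (div_le_self hMa0 (one_le_pow₀ hm1))
      have hvb : norm (v n) ≤ norm w₂ := by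
        simp only [hv]
        rw [norm_div, norm_pow]
        exact div_le_self (norm_nonneg _) (one_le_pow₀ hm1)
      set f : ℂ → ℂ := fun ζ => V (u' n) ζ (v n) (t n) with hfdef
      have hf : Differentiable ℂ f := by
        have h1 := hholo₁ (t n) (htnn n)
        have hpair : Differentiable ℂ (fun ζ : ℂ => (ζ, v n)) :=
          differentiable_id.prodMk (differentiable_const _)
        exact ((h1.comp hpair).sub (differentiable_const _)).sub
          (differentiable_id.sub (differentiable_const _))
      have hf0 : f (u' n) = 0 := by simp [hfdef, hVdef]
      have hbnd : ∀ ζ : ℂ, dist ζ (u' n) < 1 → norm (f ζ) ≤ ε := by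
        intro ζ hζ
        refine hsmall (t n) (htnn n) hn1.le (u' n, ζ, v n) ?_
        rw [Prod.norm_def, Prod.norm_def]
        have hζ1 : norm (ζ - u' n) < 1 := by rwa [Complex.dist_eq] at hζ
        have hζa : norm ζ ≤ Ma + 1 := by
          calc norm ζ = norm ((ζ - u' n) + u' n) := by ring_nf
            _ ≤ norm (ζ - u' n) + norm (u' n) := norm_add_le _ _
            _ ≤ Ma + 1 := by linarith
        apply max_le
        · rw [hRdef]; linarith [norm_nonneg w₂]
        · apply max_le
          · rw [hRdef]; linarith [norm_nonneg w₂]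
          · rw [hRdef]; linarith
      have hw : dist (u n) (u' n) < 1 := by
        rw [Complex.dist_eq]
        have hsub : u n - u' n = (w₁ - aa) / (μ ^ p) ^ n := useq_sub hμ0 w₁ aa w₂ p n
        rw [hsub, norm_div, norm_pow, norm_pow]
        exact hn2
      have hS := schwarz_bound hf hf0 one_pos hbnd hw
      have hdist : dist (u n) (u' n) = norm (w₁ - aa) / (m ^ p) ^ n := by
        rw [Complex.dist_eq, useq_sub hμ0 w₁ aa w₂ p n, norm_div, norm_pow, norm_pow]
      rw [hdist] at hS
      have hfu : norm (V (u' n) (u n) (v n) (t n))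
          ≤ ε / 1 * (norm (w₁ - aa) / (m ^ p) ^ n) := hS
      calc (m ^ p) ^ n * norm (V (u' n) (u n) (v n) (t n))
          ≤ (m ^ p) ^ n * (ε / 1 * (norm (w₁ - aa) / (m ^ p) ^ n)) := by gcongr
        _ = ε * norm (w₁ - aa) := by
            have hne : ((m:ℝ) ^ p) ^ n ≠ 0 := by positivity
            field_simp
        _ ≤ ε * (norm (w₁ - aa) + 1) := by nlinarith [norm_nonneg (w₁ - aa)]
    have habs : norm (V aa w₁ w₂ x) = 0 := by
      by_contra h
      have hpos : 0 < norm (V aa w₁ w₂ x) :=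
        lt_of_le_of_ne (norm_nonneg _) (Ne.symm h)
      have hC : (0:ℝ) < norm (w₁ - aa) + 1 := by positivity
      have h1 := hfinal (norm (V aa w₁ w₂ x) / (2 * (norm (w₁ - aa) + 1)))
        (by positivity)
      have h2 : norm (V aa w₁ w₂ x) / (2 * (norm (w₁ - aa) + 1))
          * (norm (w₁ - aa) + 1) = norm (V aa w₁ w₂ x) / 2 := by
        field_simp
      rw [h2] at h1
      linarith
    exact norm_eq_zero.mp habs
  ---------------------------------------------------------------------------
  -- Stage 2 : structure of g z t = ξ₁ 0 z t
  ---------------------------------------------------------------------------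
  set g : ℂ → ℝ → ℂ := fun z t => ξ₁ 0 z t with hgdef
  have hgdiff : ∀ t : ℝ, 0 ≤ t → Differentiable ℂ (fun z => g z t) := fun t ht =>
    (hholo₁ t ht).comp ((differentiable_const 0).prodMk differentiable_id)
  have hg0 : ∀ z : ℂ, g z 0 = 0 := fun z => by simp [hgdef, hbd₁]
  have hgfe : ∀ t : ℝ, 0 ≤ t → ∀ z : ℂ,
      g (μ * z) (φ t) = μ ^ p * g z t + ((z + b t) ^ p - z ^ p) := by
    intro t ht z
    have h := hL1 0 z t ht
    rw [hξ2 t ht 0 z] at h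
    have h2 : ξ₁ (μ ^ p * 0 + z ^ p) (μ * z) (φ t)
        = ξ₁ 0 (μ * z) (φ t) + (μ ^ p * 0 + z ^ p - 0) :=
      hξ1 (φ t) (hφmaps t ht) (μ * z) 0 (μ ^ p * 0 + z ^ p)
    rw [h2] at h
    simp only [hgdef]
    linear_combination h
  have hDrel : ∀ t : ℝ, 0 ≤ t → ∀ j : ℕ,
      μ ^ j * iteratedDeriv j (fun z => g z (φ t)) 0
        = μ ^ p * iteratedDeriv j (fun z => g z t) 0
          + ((⇑Polynomial.derivative)^[j]
              ((Polynomial.X + Polynomial.C (b t)) ^ p - Polynomial.X ^ p)).eval 0 := by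
    intro t ht j
    set Q : Polynomial ℂ := (Polynomial.X + Polynomial.C (b t)) ^ p - Polynomial.X ^ p with hQdef
    have heq : (fun z => g (μ * z) (φ t)) = (fun z : ℂ => μ ^ p * g z t + Q.eval z) := by
      funext z
      rw [hgfe t ht z]
      simp [hQdef]
    have hL : iteratedDeriv j (fun z => g (μ * z) (φ t)) 0
        = μ ^ j * iteratedDeriv j (fun z => g z (φ t)) 0 := by
      have h2 := iteratedDeriv_comp_const_mul (n := j) (f := fun z => g z (φ t))
        ((hgdiff (φ t) (hφmaps t ht)).contDiff) μ
      have h3 := congrFun h2 0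
      simpa using h3
    have hR : iteratedDeriv j (fun z : ℂ => μ ^ p * g z t + Q.eval z) 0
        = μ ^ p * iteratedDeriv j (fun z => g z t) 0
          + ((⇑Polynomial.derivative)^[j] Q).eval 0 := by
      rw [iteratedDeriv_add'' ((hgdiff t ht).const_mul (μ ^ p)) Q.differentiable 0,
        iteratedDeriv_cmul (hgdiff t ht) (μ ^ p) 0, iteratedDeriv_polyeval]
    rw [← hL, heq, hR]
  have hD0 : ∀ j : ℕ, iteratedDeriv j (fun z => g z 0) 0 = 0 := by
    intro j
    have hzero : (fun z : ℂ => g z 0) = (fun z : ℂ => (0 : Polynomial ℂ).eval z) := by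
      funext z
      simp [hg0 z]
    rw [hzero, iteratedDeriv_polyeval]
    simp
  have hDtop : ∀ t0 : ℝ, 0 ≤ t0 → ∀ j : ℕ, p ≤ j →
      iteratedDeriv j (fun z => g z t0) 0 = 0 := by
    intro t0 ht0 j hj
    obtain ⟨t, htz, htnn, htle, htstep, htlim⟩ :=
      exists_backward_orbit φ hφcont hφbij hexp ht0
    have hQzero : ∀ s : ℝ, (⇑Polynomial.derivative)^[j]
        ((Polynomial.X + Polynomial.C (b s)) ^ p - Polynomial.X ^ p) = 0 := fun s =>
      Polynomial.iterate_derivative_eq_zero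
        (lt_of_lt_of_le (natDegree_shiftpow_sub_lt (by omega) (b s)) hj)
    have hrel2 : ∀ s : ℝ, 0 ≤ s →
        μ ^ j * iteratedDeriv j (fun z => g z (φ s)) 0
          = μ ^ p * iteratedDeriv j (fun z => g z s) 0 := by
      intro s hs
      have h := hDrel s hs j
      rwa [hQzero s, Polynomial.eval_zero, add_zero] at h
    have hsplit : μ ^ j = μ ^ p * μ ^ (j - p) := by
      rw [← pow_add]
      congr 1
      omega
    have hchain : ∀ n, iteratedDeriv j (fun z => g z (t n)) 0
        = (μ ^ (j - p)) ^ n * iteratedDeriv j (fun z => g z t0) 0 := by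
      intro n
      induction n with
      | zero => simp [htz]
      | succ n ih =>
        have h := hrel2 (t (n+1)) (htnn (n+1))
        rw [htstep n, ih] at h
        have h2 : μ ^ p * iteratedDeriv j (fun z => g z (t (n+1))) 0
            = μ ^ p * ((μ ^ (j - p)) ^ (n+1) * iteratedDeriv j (fun z => g z t0) 0) := by
          rw [← h, hsplit]
          ring
        exact mul_left_cancel₀ (pow_ne_zero p hμ0) h2
    -- uniform bound for `g` near the boundary
    have hgcont2 : ContinuousOn (fun q : ℂ × ℝ => g q.1 q.2) (univ ×ˢ Ici 0) := by
      have hmap : ∀ q : ℂ × ℝ, q ∈ (univ ×ˢ Ici 0 : Set (ℂ × ℝ)) →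
          (((0:ℂ), q.1, q.2) : ℂ × ℂ × ℝ) ∈ (univ ×ˢ univ ×ˢ Ici 0 : Set (ℂ × ℂ × ℝ)) :=
        fun q hq => ⟨trivial, trivial, hq.2⟩
      exact hcont₁.comp
        ((continuous_const.prodMk (continuous_fst.prodMk continuous_snd)).continuousOn) hmap
    rcases eq_or_lt_of_le hj with hjp | hjp
    · -- j = p : invariant coefficient, vanishing by continuity at the boundary
      have hzero : ∀ ε : ℝ, 0 < ε → norm (iteratedDeriv j (fun z => g z t0) 0) ≤ ε := by
        intro ε hε
        have hfac : (0:ℝ) < (j.factorial : ℝ) := by positivity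
        obtain ⟨δ, hδpos, hsmall⟩ :=
          small_param (E := ℂ) (F := fun z t' => g z t') hgcont2 (fun z => hg0 z) 1
            (show (0:ℝ) < ε / (j.factorial : ℝ) by positivity)
        obtain ⟨n, hn⟩ := (htlim.eventually_lt_const hδpos).exists
        have hj0 : j - p = 0 := by omega
        have hchn := hchain n
        rw [hj0] at hchn
        simp only [pow_zero, one_pow, one_mul] at hchn
        rw [← hchn]
        have hb2 : ∀ z : ℂ, norm z ≤ 1 → norm (g z (t n)) ≤ ε / (j.factorial : ℝ) := by
          intro z hz
          refine hsmall (t n) (htnn n) hn.le z ?_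
          exact hz
        have := cauchy_bound (hgdiff (t n) (htnn n)) hb2 j
        calc norm (iteratedDeriv j (fun z => g z (t n)) 0)
            ≤ j.factorial * (ε / (j.factorial : ℝ)) := this
          _ = ε := by field_simp
      by_contra h
      have hpos : 0 < norm (iteratedDeriv j (fun z => g z t0) 0) :=
        lt_of_le_of_ne (norm_nonneg _) (Ne.symm fun h2 => h (norm_eq_zero.mp h2))
      have := hzero _ (half_pos hpos)
      linarith
    · -- j > p : exponentially contracting coefficient
      obtain ⟨B, hB⟩ := ((isCompact_closedBall (0:ℂ) 1).prod
        (isCompact_Icc (a := (0:ℝ)) (b := t0))).exists_bound_of_continuousOn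
        (hgcont2.mono (fun q hq => ⟨trivial, hq.2.1⟩))
      have hDb : ∀ n, norm (iteratedDeriv j (fun z => g z (t n)) 0)
          ≤ j.factorial * B := by
        intro n
        apply cauchy_bound (hgdiff (t n) (htnn n))
        intro z hz
        have := hB (z, t n) ⟨mem_closedBall_zero_iff.mpr (by exact hz),
          htnn n, htle n⟩
        exact this
      by_contra h
      have hpos : 0 < norm (iteratedDeriv j (fun z => g z t0) 0) :=
        lt_of_le_of_ne (norm_nonneg _) (Ne.symm fun h2 => h (norm_eq_zero.mp h2))
      have hkey : ∀ n : ℕ, norm μ ^ n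
          ≤ (j.factorial * B) / norm (iteratedDeriv j (fun z => g z t0) 0) := by
        intro n
        have h1 := hDb n
        rw [hchain n, norm_mul, norm_pow, norm_pow] at h1
        have h2 : norm μ ^ n ≤ (norm μ ^ (j - p)) ^ n := by
          rw [← pow_mul]
          exact pow_le_pow_right₀ hm1 (by nlinarith [Nat.sub_pos_of_lt hjp])
        rw [le_div_iff₀ hpos]
        calc norm μ ^ n * norm (iteratedDeriv j (fun z => g z t0) 0)
            ≤ (norm μ ^ (j - p)) ^ n
              * norm (iteratedDeriv j (fun z => g z t0) 0) := by gcongr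
          _ ≤ j.factorial * B := h1
      obtain ⟨n, hn⟩ := ((tendsto_pow_atTop_atTop_of_one_lt hμ).eventually_gt_atTop
        ((j.factorial * B) / norm (iteratedDeriv j (fun z => g z t0) 0))).exists
      exact absurd (hkey n) (not_le.mpr hn)
  -- the Taylor coefficients
  set a : Fin p → ℝ → ℂ :=
    fun j x => (((j : ℕ).factorial : ℂ))⁻¹ * iteratedDeriv (j : ℕ) (fun z => g z x) 0 with hadef
  have hrepr : ∀ x : ℝ, 0 ≤ x → ∀ z : ℂ,
      g z x = ∑ j : Fin p, a j x * z ^ (j : ℕ) := by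
    intro x hx z
    have hsum := Complex.hasSum_taylorSeries_of_entire (hgdiff x hx) 0 z
    have hzero : ∀ n ∉ Finset.range p,
        ((n.factorial : ℂ)⁻¹ • (z - 0) ^ n • iteratedDeriv n (fun z' => g z' x) 0) = 0 := by
      intro n hn
      have hpn : p ≤ n := le_of_not_gt fun hc => hn (Finset.mem_range.mpr hc)
      rw [hDtop x hx n hpn]
      simp
    have h2 := hasSum_sum_of_ne_finset_zero (L := SummationFilter.unconditional ℕ) hzero
    have h3 := hsum.unique h2
    rw [h3, ← Fin.sum_univ_eq_sum_range
      (fun n => (n.factorial : ℂ)⁻¹ • (z - 0) ^ n • iteratedDeriv n (fun z' => g z' x) 0) p]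
    refine Finset.sum_congr rfl fun j _ => ?_
    simp only [hadef, sub_zero, smul_eq_mul]
    ring
  have ha0 : ∀ j : Fin p, a j 0 = 0 := by
    intro j
    simp only [hadef]
    rw [hD0 (j : ℕ)]
    simp
  have hacont : ∀ j : Fin p, ContinuousOn (a j) (Set.Ici 0) := by
    intro j
    have hanode : ∀ w : ℂ, ContinuousOn (fun x : ℝ => g w x) (Set.Ici 0) := fun w =>
      hcont₁.comp ((continuous_const.prodMk
        (continuous_const.prodMk continuous_id)).continuousOn)
        (fun x hx => ⟨trivial, trivial, hx⟩)
    refine ContinuousOn.congr (f := fun x : ℝ => ∑ k : Fin p,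
      ((Matrix.vandermonde (fun i : Fin p => ((i : ℕ) : ℂ)))⁻¹ j k) * g ((k : ℕ) : ℂ) x)
      ?_ ?_
    · apply continuousOn_finset_sum
      intro k _
      exact continuousOn_const.mul (hanode _)
    · intro x hx
      exact vandermonde_solve (fun i : Fin p => a i x) (fun k : Fin p => g ((k : ℕ) : ℂ) x)
        (fun k => hrepr x hx _) j
  have harec : ∀ j : Fin p, ∀ x : ℝ, 0 ≤ x →
      a j (φ x) = μ ^ (p - (j : ℕ)) * a j x
        + ((p.choose (j : ℕ) : ℂ) / μ ^ (j : ℕ)) * (b x) ^ (p - (j : ℕ)) := by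
    intro j x hx
    have hjp : (j : ℕ) < p := j.isLt
    have h := hDrel x hx (j : ℕ)
    rw [iterate_derivative_shiftpow_sub_eval_zero hjp (b x)] at h
    have hpk : μ ^ p = μ ^ (j : ℕ) * μ ^ (p - (j : ℕ)) := by
      rw [← pow_add]
      congr 1
      omega
    have hfac : (((j : ℕ).factorial : ℂ)) ≠ 0 := Nat.cast_ne_zero.mpr (Nat.factorial_ne_zero _)
    have hμj : (μ : ℂ) ^ (j : ℕ) ≠ 0 := pow_ne_zero _ hμ0
    simp only [hadef]
    rw [hpk] at h
    field_simp
    linear_combination h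
  refine ⟨a, b, hacont, hbcont, ha0, hb0, hbφ, harec, ?_⟩
  intro z₁ z₂ x hx
  constructor
  · have h1 := hξ1 x hx z₂ 0 z₁
    have h2 : ξ₁ 0 z₂ x = ∑ j : Fin p, a j x * z₂ ^ (j : ℕ) := hrepr x hx z₂
    rw [h1, h2]
    ring
  · exact hξ2 x hx z₁ z₂
end

section
/- Let n ≥ 1, let λ ∈ ℂ with |λ| > 1, and let φ : [0,∞) → [0,∞) be a homeomorphism with φ(0) = 0 and φ(x) > x for all x > 0. Suppose ξ : ℂⁿ × [0,∞) → ℂⁿ is continuous, for each fixed x ≥ 0 the map z ↦ ξ(z,x) is holomorphic (entire) on ℂⁿ, ξ(z,0) = z for all z ∈ ℂⁿ, and ξ(λz, φ(x)) = λ·ξ(z,x) for all z ∈ ℂⁿ and x ≥ 0. Then there exists a continuous function a : [0,∞) → ℂⁿ with a(0) = 0 and a(φ(x)) = λ·a(x) for all x ≥ 0 such that ξ(z,x) = z + a(x) for all (z,x). (Classification underlying Example 4.3: the kernel part Aut(R,H) ≅ (𝒵_{φ,λ})ⁿ ⋊ Z_φ for G = λ·Iₙ) -/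
open Filter

/-- Backward orbit of a point under an expanding homeomorphism of `[0,∞)`. -/
lemma example_4_3_backward_orbit (φ : ℝ → ℝ)
    (hφcont : ContinuousOn φ (Set.Ici 0))
    (hφbij : Set.BijOn φ (Set.Ici 0) (Set.Ici 0))
    (hexp : ∀ x : ℝ, 0 < x → x < φ x)
    {x : ℝ} (hx : 0 ≤ x) :
    ∃ y : ℕ → ℝ, y 0 = x ∧ (∀ k, 0 ≤ y k) ∧ (∀ k, φ (y (k + 1)) = y k) ∧
      Filter.Tendsto y Filter.atTop (nhds 0) := by
  set ψ : ℝ → ℝ := Function.invFunOn φ (Set.Ici 0) with hψdef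
  have hψ : ∀ w : ℝ, 0 ≤ w → 0 ≤ ψ w ∧ φ (ψ w) = w := by
    intro w hw
    have hex : ∃ a ∈ Set.Ici (0:ℝ), φ a = w := hφbij.surjOn hw
    exact ⟨Function.invFunOn_mem hex, Function.invFunOn_eq hex⟩
  set y : ℕ → ℝ := fun k => ψ^[k] x with hydef
  have hynn : ∀ k, 0 ≤ y k := by
    intro k
    induction k with
    | zero => exact hx
    | succ k ih =>
      have : y (k+1) = ψ (y k) := Function.iterate_succ_apply' ψ k x
      rw [this]; exact (hψ _ ih).1
  have hystep : ∀ k, φ (y (k + 1)) = y k := by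
    intro k
    have : y (k+1) = ψ (y k) := Function.iterate_succ_apply' ψ k x
    rw [this]; exact (hψ _ (hynn k)).2
  have hanti : Antitone y := by
    apply antitone_nat_of_succ_le
    intro k
    rcases eq_or_lt_of_le (hynn (k+1)) with h | h
    · rw [← h]; exact hynn k
    · have := hexp _ h
      rw [hystep k] at this
      exact this.le
  have hbdd : BddBelow (Set.range y) := ⟨0, by rintro _ ⟨k, rfl⟩; exact hynn k⟩
  have ht : Tendsto y atTop (nhds (⨅ k, y k)) := tendsto_atTop_ciInf hanti hbdd
  set L := ⨅ k, y k with hL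
  have hL0 : 0 ≤ L := le_ciInf hynn
  have hLfix : φ L = L := by
    have h1 : Tendsto (fun k => y (k + 1)) atTop (nhds L) :=
      ht.comp (tendsto_add_atTop_nat 1)
    have h1' : Tendsto (fun k => y (k + 1)) atTop (nhdsWithin L (Set.Ici 0)) :=
      tendsto_nhdsWithin_iff.mpr ⟨h1, Filter.Eventually.of_forall fun k => hynn (k+1)⟩
    have h2 : Tendsto (fun k => φ (y (k + 1))) atTop (nhds (φ L)) :=
      (hφcont L hL0).tendsto.comp h1'
    have h3 : Tendsto (fun k => φ (y (k + 1))) atTop (nhds L) := by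
      simpa only [hystep] using ht
    exact tendsto_nhds_unique h2 h3
  have hLzero : L = 0 := by
    by_contra h
    have hLpos : 0 < L := lt_of_le_of_ne hL0 (Ne.symm h)
    have := hexp L hLpos
    rw [hLfix] at this
    exact absurd this (lt_irrefl L)
  exact ⟨y, rfl, hynn, hystep, hLzero ▸ ht⟩

/-- Classification underlying Example 4.3: for `G = λ·Iₙ` with `|λ| > 1` and a
homeomorphism `φ` of `[0,∞)` with `φ(0) = 0` and `φ(x) > x` for `x > 0`, any
leafwise-holomorphic lift `ξ` restricting to the identity on the boundary and
equivariant for `(λz, φ(x))` has the form `ξ(z,x) = z + a(x)` with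
`a ∈ (𝒵_{φ,λ})ⁿ`. -/
theorem example_4_3_classification (n : ℕ) (hn : 1 ≤ n)
    (lam : ℂ) (hlam : 1 < ‖lam‖)
    (φ : ℝ → ℝ)
    (hφcont : ContinuousOn φ (Set.Ici 0))
    (hφmono : StrictMonoOn φ (Set.Ici 0))
    (hφbij : Set.BijOn φ (Set.Ici 0) (Set.Ici 0))
    (hφ0 : φ 0 = 0)
    (hexp : ∀ x : ℝ, 0 < x → x < φ x)
    (ξ : (Fin n → ℂ) → ℝ → (Fin n → ℂ))
    (hcont : ContinuousOn (fun q : (Fin n → ℂ) × ℝ => ξ q.1 q.2)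
      (Set.univ ×ˢ Set.Ici 0))
    (hholo : ∀ x : ℝ, 0 ≤ x → Differentiable ℂ (fun z : Fin n → ℂ => ξ z x))
    (hbd : ∀ z : Fin n → ℂ, ξ z 0 = z)
    (heq : ∀ z : Fin n → ℂ, ∀ x : ℝ, 0 ≤ x →
      ξ (lam • z) (φ x) = lam • ξ z x) :
    ∃ a : ℝ → (Fin n → ℂ),
      ContinuousOn a (Set.Ici 0) ∧ a 0 = 0 ∧
      (∀ x : ℝ, 0 ≤ x → a (φ x) = lam • a x) ∧
      ∀ z : Fin n → ℂ, ∀ x : ℝ, 0 ≤ x → ξ z x = z + a x := by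
  have hlam0 : lam ≠ 0 := by
    rintro rfl
    simp only [norm_zero] at hlam
    linarith
  have hlampos : 0 < ‖lam‖ := lt_trans one_pos hlam
  -- Step 1: homogeneity of `z ↦ ξ z x - ξ 0 x` along complex lines.
  have hhom : ∀ x : ℝ, 0 ≤ x → ∀ z : Fin n → ℂ, ∀ t : ℂ,
      ξ (t • z) x - ξ 0 x = t • (ξ z x - ξ 0 x) := by
    intro x hx z t
    obtain ⟨y, hy0, hynn, hystep, hylim⟩ :=
      example_4_3_backward_orbit φ hφcont hφbij hexp hx
    set g : ℕ → ℂ → (Fin n → ℂ) := fun k s => ξ (s • z) (y k) - ξ 0 (y k) with hg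
    have hstep : ∀ k (s : ℂ), g k (lam * s) = lam • g (k+1) s := by
      intro k s
      have h1 := heq (s • z) (y (k+1)) (hynn _)
      have h2 := heq 0 (y (k+1)) (hynn _)
      rw [hystep] at h1 h2
      rw [smul_zero] at h2
      rw [smul_smul] at h1
      simp only [hg, h1, h2, smul_sub]
    have hiter : ∀ k (s : ℂ), g 0 (lam ^ k * s) = lam ^ k • g k s := by
      intro k
      induction k with
      | zero => intro s; simp
      | succ k ih =>
        intro s
        have hmul : lam ^ (k+1) * s = lam ^ k * (lam * s) := by ring
        rw [hmul, ih, hstep, smul_smul, ← pow_succ]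
    -- uniform bound on the compact set
    have hSc : IsCompact (insert (0:ℝ) (Set.range y)) := hylim.isCompact_insert_range
    have hBc : IsCompact ((fun s : ℂ => s • z) '' Metric.closedBall 0 1) :=
      (isCompact_closedBall _ _).image (continuous_id.smul continuous_const)
    have hsub : (((fun s : ℂ => s • z) '' Metric.closedBall 0 1) ×ˢ
        insert (0:ℝ) (Set.range y)) ⊆ Set.univ ×ˢ Set.Ici 0 := by
      rintro ⟨w, u⟩ ⟨-, hu⟩
      refine ⟨trivial, ?_⟩
      rcases hu with rfl | ⟨k, rfl⟩
      · exact Set.self_mem_Ici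
      · exact hynn k
    obtain ⟨M, hM⟩ := (hBc.prod hSc).exists_bound_of_continuousOn (hcont.mono hsub)
    have hMy : ∀ k (s : ℂ), ‖s‖ ≤ 1 → ‖ξ (s • z) (y k)‖ ≤ M := by
      intro k s hs
      exact hM (s • z, y k) ⟨⟨s, by simpa using hs, rfl⟩, Or.inr ⟨k, rfl⟩⟩
    have hgk : ∀ k (s : ℂ), ‖s‖ ≤ 1 → ‖g k s‖ ≤ 2 * M := by
      intro k s hs
      have h1 : ‖ξ (s • z) (y k)‖ ≤ M := hMy k s hs
      have h2 : ‖ξ 0 (y k)‖ ≤ M := by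
        have := hMy k 0 (by simp)
        simpa using this
      calc ‖g k s‖ ≤ ‖ξ (s • z) (y k)‖ + ‖ξ 0 (y k)‖ := norm_sub_le _ _
        _ ≤ 2 * M := by linarith
    have hM0 : 0 ≤ M := le_trans (norm_nonneg _) (hMy 0 0 (by simp))
    -- g 0 is entire
    have hg0diff : Differentiable ℂ (g 0) := by
      have hd : Differentiable ℂ (fun s : ℂ => ξ (s • z) x) :=
        (hholo x hx).comp (differentiable_id.smul_const z)
      have : g 0 = fun s => ξ (s • z) x - ξ 0 x := by
        funext s; simp only [hg, hy0]
      rw [this]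
      exact hd.sub_const _
    have hg00 : g 0 0 = 0 := by simp [hg]
    -- the difference quotient is entire and bounded
    have hddiff : Differentiable ℂ (dslope (g 0) 0) := by
      rw [← differentiableOn_univ] at hg0diff ⊢
      exact (Complex.differentiableOn_dslope Filter.univ_mem).mpr hg0diff
    obtain ⟨M₁, hM₁⟩ := (isCompact_closedBall (0:ℂ) 1).exists_bound_of_continuousOn
      hddiff.continuous.continuousOn
    have hdsval : ∀ s : ℂ, s ≠ 0 → s • dslope (g 0) 0 s = g 0 s := by
      intro s hs
      have := sub_smul_dslope (g 0) 0 s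
      rwa [sub_zero, hg00, sub_zero] at this
    have hbound : ∀ s : ℂ, ‖dslope (g 0) 0 s‖ ≤ max M₁ (2 * M * ‖lam‖) := by
      intro s
      rcases le_or_gt ‖s‖ 1 with hs | hs
      · exact le_trans (hM₁ s (by simpa using hs)) (le_max_left _ _)
      · have hs0 : s ≠ 0 := by
          intro h; rw [h] at hs; simp at hs; linarith
        have hex : ∃ k : ℕ, ‖s‖ ≤ ‖lam‖ ^ k := by
          obtain ⟨k, hk⟩ := pow_unbounded_of_one_lt ‖s‖ hlam
          exact ⟨k, hk.le⟩
        set k₀ := Nat.find hex with hk₀def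
        have hk₀le : ‖s‖ ≤ ‖lam‖ ^ k₀ := Nat.find_spec hex
        have hk₀pos : k₀ ≠ 0 := by
          intro h
          rw [h, pow_zero] at hk₀le
          linarith
        obtain ⟨j, hj⟩ : ∃ j, k₀ = j + 1 := ⟨k₀ - 1, (Nat.succ_pred_eq_of_pos
          (Nat.pos_of_ne_zero hk₀pos)).symm⟩
        have hjlt : ‖lam‖ ^ j < ‖s‖ := by
          have := Nat.find_min hex (m := j) (by omega)
          linarith [not_le.mp this]
        have hk₀bound : ‖lam‖ ^ k₀ ≤ ‖lam‖ * ‖s‖ := by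
          rw [hj, pow_succ]
          calc ‖lam‖ ^ j * ‖lam‖
              ≤ ‖s‖ * ‖lam‖ :=
                mul_le_mul_of_nonneg_right hjlt.le hlampos.le
            _ = ‖lam‖ * ‖s‖ := mul_comm _ _
        -- rewrite g 0 s via the iteration
        have hlamk : (lam : ℂ) ^ k₀ ≠ 0 := pow_ne_zero _ hlam0
        have hrw : g 0 s = lam ^ k₀ • g k₀ (s / lam ^ k₀) := by
          have := hiter k₀ (s / lam ^ k₀)
          rwa [mul_div_cancel₀ _ hlamk] at this
        have hsmall : ‖s / lam ^ k₀‖ ≤ 1 := by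
          rw [norm_div, norm_pow]
          rw [div_le_one (by positivity)]
          exact hk₀le
        have hgs : ‖g 0 s‖ ≤ ‖lam‖ ^ k₀ * (2 * M) := by
          rw [hrw, norm_smul, norm_pow]
          exact mul_le_mul_of_nonneg_left (hgk k₀ _ hsmall) (by positivity)
        have hds : dslope (g 0) 0 s = s⁻¹ • g 0 s := by
          have h := hdsval s hs0
          rw [← h, smul_smul, inv_mul_cancel₀ hs0, one_smul]
        have : ‖dslope (g 0) 0 s‖ ≤ 2 * M * ‖lam‖ := by
          rw [hds, norm_smul, norm_inv]
          calc ‖s‖⁻¹ * ‖g 0 s‖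
              ≤ ‖s‖⁻¹ * (‖lam‖ ^ k₀ * (2 * M)) :=
                mul_le_mul_of_nonneg_left hgs (by positivity)
            _ ≤ ‖s‖⁻¹ * (‖lam‖ * ‖s‖ * (2 * M)) := by
                apply mul_le_mul_of_nonneg_left _ (by positivity)
                exact mul_le_mul_of_nonneg_right hk₀bound (by positivity)
            _ = (‖s‖⁻¹ * ‖s‖) * (2 * M * ‖lam‖) := by ring
            _ = 2 * M * ‖lam‖ := by
                rw [inv_mul_cancel₀ (by positivity : (‖s‖:ℝ) ≠ 0), one_mul]
        exact le_trans this (le_max_right _ _)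
    -- Liouville: the difference quotient is constant
    have hrange : Bornology.IsBounded (Set.range (dslope (g 0) 0)) := by
      rw [Metric.isBounded_iff_subset_closedBall 0]
      exact ⟨max M₁ (2 * M * ‖lam‖), by
        rintro _ ⟨s, rfl⟩
        simpa using hbound s⟩
    have hconst : ∀ s : ℂ, dslope (g 0) 0 s = dslope (g 0) 0 1 :=
      fun s => hddiff.apply_eq_apply_of_bounded hrange s 1
    have hd1 : dslope (g 0) 0 1 = g 0 1 := by
      have := hdsval 1 one_ne_zero
      rwa [one_smul] at this
    -- conclude homogeneity
    have hfinal : g 0 t = t • g 0 1 := by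
      rcases eq_or_ne t 0 with rfl | ht
      · rw [hg00, zero_smul]
      · rw [← hdsval t ht, hconst t, hd1]
    have hg01 : g 0 1 = ξ z x - ξ 0 x := by simp [hg, hy0]
    have hg0t : g 0 t = ξ (t • z) x - ξ 0 x := by simp [hg, hy0]
    rw [← hg0t, ← hg01, hfinal]
  -- Step 2: invariance under φ
  have hGφ : ∀ x : ℝ, 0 ≤ x → ∀ z : Fin n → ℂ,
      ξ z (φ x) - ξ 0 (φ x) = ξ z x - ξ 0 x := by
    intro x hx z
    have h1 := heq z x hx
    have h2 := heq 0 x hx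
    rw [smul_zero] at h2
    have h3 := hhom (φ x) (hφbij.mapsTo hx) z lam
    have h4 : lam • (ξ z (φ x) - ξ 0 (φ x)) = lam • (ξ z x - ξ 0 x) := by
      rw [← h3, h1, h2, smul_sub]
    exact smul_right_injective (Fin n → ℂ) hlam0 h4
  -- Step 3: take the limit along backward orbits
  have key : ∀ z : Fin n → ℂ, ∀ x : ℝ, 0 ≤ x → ξ z x - ξ 0 x = z := by
    intro z x hx
    obtain ⟨y, hy0, hynn, hystep, hylim⟩ :=
      example_4_3_backward_orbit φ hφcont hφbij hexp hx
    have hconst : ∀ k, ξ z (y k) - ξ 0 (y k) = ξ z x - ξ 0 x := by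
      intro k
      induction k with
      | zero => rw [hy0]
      | succ k ih =>
        have h := hGφ (y (k+1)) (hynn (k+1)) z
        rw [hystep k] at h
        rw [← h, ih]
    have htend : ∀ w : Fin n → ℂ,
        Tendsto (fun k => ξ w (y k)) atTop (nhds (ξ w 0)) := by
      intro w
      have h1 : Tendsto (fun k => ((w, y k) : (Fin n → ℂ) × ℝ)) atTop
          (nhdsWithin (w, 0) (Set.univ ×ˢ Set.Ici 0)) := by
        apply tendsto_nhdsWithin_iff.mpr
        constructor
        · exact tendsto_const_nhds.prodMk_nhds hylim
        · exact Filter.Eventually.of_forall fun k => ⟨trivial, hynn k⟩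
      exact (hcont (w, 0) ⟨trivial, Set.self_mem_Ici⟩).tendsto.comp h1
    have h2 : Tendsto (fun k => ξ z (y k) - ξ 0 (y k)) atTop
        (nhds (ξ z 0 - ξ 0 0)) := (htend z).sub (htend 0)
    have h3 : Tendsto (fun k => ξ z (y k) - ξ 0 (y k)) atTop
        (nhds (ξ z x - ξ 0 x)) := by
      simp only [hconst]
      exact tendsto_const_nhds
    have h4 := tendsto_nhds_unique h3 h2
    rw [hbd z, hbd 0, sub_zero] at h4
    exact h4
  refine ⟨fun x => ξ 0 x, ?_, ?_, ?_, ?_⟩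
  · exact hcont.comp (continuous_const.prodMk continuous_id).continuousOn
      (fun x hx => ⟨trivial, hx⟩)
  · exact hbd 0
  · intro x hx
    have := heq 0 x hx
    rwa [smul_zero] at this
  · intro z x hx
    have := key z x hx
    rw [sub_eq_iff_eq_add] at this
    rw [this, add_comm]
end
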